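/- arXiv:1403.8147 — 7 statements merged into one kernel-verified Lean document; each statement's English description precedes it below -/
import Mathlib

section
/- For every positive integer d there exist constants k_d > 0 and C_d ≥ 0 with the following property: for every positive integer n and every set P of n points in general position in ℝ^d, there is a point of ℝ^d contained in at least k_d·binom(n, d+1) − C_d·n^d of the d-simplices spanned by (d+1)-element subsets of P. -/
open scoped Classical
open Metric Finset Module
open scoped RealInnerProductSpace

set_option maxHeartbeats 1000000

-- helper: x^(m+1) - y^(m+1) ≤ (m+1)*(x-y)*x^m for 0 ≤ y ≤ x
lemma pow_sub_pow_le' (m : ℕ) {x y : ℝ} (hy : 0 ≤ y) (hxy : y ≤ x) :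
    x ^ (m+1) - y ^ (m+1) ≤ (m+1) * (x - y) * x ^ m := by
  induction m with
  | zero => simp
  | succ m ih =>
    have hx : 0 ≤ x := hy.trans hxy
    have hyx : y ^ (m+1) ≤ x ^ (m+1) := pow_le_pow_left₀ hy hxy _
    have h1 : x ^ (m+2) - y ^ (m+2) = x * (x ^ (m+1) - y ^ (m+1)) + (x - y) * y ^ (m+1) := by
      ring
    have h2 : x * (x ^ (m+1) - y ^ (m+1)) ≤ x * ((m+1) * (x - y) * x ^ m) :=
      mul_le_mul_of_nonneg_left ih hx
    have h3 : (x - y) * y ^ (m+1) ≤ (x - y) * x ^ (m+1) :=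
      mul_le_mul_of_nonneg_left hyx (by linarith)
    have : x * ((m+1) * (x - y) * x ^ m) = (m+1) * (x-y) * x ^ (m+1) := by ring
    push_cast
    nlinarith [pow_nonneg hx m]

-- helper: if inner positive, a point on segment [q,y] is closer to p
lemma exists_closer' {E' : Type*} [NormedAddCommGroup E'] [InnerProductSpace ℝ E']
    {p q y : E'} (h : 0 < ⟪p - q, y - q⟫) :
    ∃ t : ℝ, 0 ≤ t ∧ t ≤ 1 ∧ dist p ((1 - t) • q + t • y) < dist p q := by
  set a : ℝ := ⟪p - q, y - q⟫ with ha
  have hyq : y ≠ q := by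
    intro he
    rw [ha, he, sub_self, inner_zero_right] at h
    exact lt_irrefl 0 h
  set b : ℝ := ‖y - q‖ ^ 2 with hb
  have hb0 : 0 < b := by
    have hne : y - q ≠ 0 := sub_ne_zero.mpr hyq
    have := norm_pos_iff.mpr hne
    positivity
  set t : ℝ := min 1 (a / b) with ht
  have ht0 : 0 < t := lt_min one_pos (div_pos h hb0)
  have ht1 : t ≤ 1 := min_le_left _ _
  have htb : t * b ≤ a := by
    have : t ≤ a / b := min_le_right _ _
    calc t * b ≤ (a / b) * b := by nlinarith
    _ = a := by field_simp
  refine ⟨t, ht0.le, ht1, ?_⟩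
  have hz : (1 - t) • q + t • y = q + t • (y - q) := by
    rw [smul_sub, sub_smul, one_smul]; abel
  rw [hz, dist_eq_norm, dist_eq_norm]
  have heq : p - (q + t • (y - q)) = (p - q) - t • (y - q) := by abel
  rw [heq]
  have hexp : ‖(p - q) - t • (y - q)‖ ^ 2
      = ‖p - q‖ ^ 2 - 2 * (t * a) + t ^ 2 * b := by
    rw [norm_sub_sq_real, real_inner_smul_right, norm_smul]
    rw [ha, hb]
    rw [mul_pow]
    rw [Real.norm_eq_abs, abs_of_nonneg ht0.le]
  have hlt : ‖(p - q) - t • (y - q)‖ ^ 2 < ‖p - q‖ ^ 2 := by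
    rw [hexp]
    nlinarith
  nlinarith [norm_nonneg ((p - q) - t • (y - q)), norm_nonneg (p - q)]


lemma inner_nonpos_of_dist_min {E' : Type*} [NormedAddCommGroup E'] [InnerProductSpace ℝ E']
    {K : Set E'} (hK : Convex ℝ K) {p q : E'} (hq : q ∈ K)
    (hmin : ∀ w ∈ K, dist p q ≤ dist p w) {w : E'} (hw : w ∈ K) :
    ⟪p - q, w - q⟫ ≤ 0 := by
  by_contra hpos
  push_neg at hpos
  obtain ⟨t, ht0, ht1, hlt⟩ := exists_closer' hpos
  have hz : (1 - t) • q + t • w ∈ K := hK hq hw (by linarith) ht0 (by ring)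
  exact absurd (hmin _ hz) (not_le.mpr hlt)

lemma card_le_of_hyperplane {d : ℕ} {u : EuclideanSpace ℝ (Fin d)} (hu : u ≠ 0) {c : ℝ}
    {S : Finset (EuclideanSpace ℝ (Fin d))}
    (hS : ∀ x ∈ S, ⟪u, x⟫ = c)
    (hai : AffineIndependent ℝ (fun x : (S : Set (EuclideanSpace ℝ (Fin d))) =>
      (x : EuclideanSpace ℝ (Fin d)))) :
    S.card ≤ d := by
  classical
  rcases S.eq_empty_or_nonempty with rfl | hne
  · simp
  set f : EuclideanSpace ℝ (Fin d) →ₗ[ℝ] ℝ := (innerSL ℝ u).toLinearMap with hf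
  have hfapp : ∀ v, f v = ⟪u, v⟫ := fun v => rfl
  have hker : finrank ℝ (LinearMap.ker f) + 1 = d := by
    have hrange : LinearMap.range f = ⊤ := by
      rw [LinearMap.range_eq_top]
      intro r
      refine ⟨(r / ‖u‖ ^ 2) • u, ?_⟩
      rw [hfapp, real_inner_smul_right, real_inner_self_eq_norm_sq]
      have : ‖u‖ ≠ 0 := norm_ne_zero_iff.mpr hu
      field_simp
    have h2 := LinearMap.finrank_range_add_finrank_ker f
    rw [hrange] at h2
    simp only [finrank_top, finrank_self] at h2
    rw [finrank_euclideanSpace_fin] at h2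
    omega
  have hspan : vectorSpan ℝ (S : Set (EuclideanSpace ℝ (Fin d))) ≤ LinearMap.ker f := by
    rw [vectorSpan_def, Submodule.span_le]
    rintro v ⟨x, hx, y, hy, rfl⟩
    simp only [SetLike.mem_coe, LinearMap.mem_ker, vsub_eq_sub]
    rw [hfapp, inner_sub_right, hS x hx, hS y hy, sub_self]
  have hai' : AffineIndependent ℝ (fun x : {y // y ∈ S} => (x : EuclideanSpace ℝ (Fin d))) := hai
  have hcard : Fintype.card {y // y ∈ S} = (S.card - 1) + 1 := by
    rw [Fintype.card_coe]
    have := Finset.card_pos.mpr hne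
    omega
  have hfr := hai'.finrank_vectorSpan hcard
  have hrange : Set.range (fun x : {y // y ∈ S} => (x : EuclideanSpace ℝ (Fin d)))
      = (S : Set (EuclideanSpace ℝ (Fin d))) := by
    ext z; simp
  rw [hrange] at hfr
  have hle := Submodule.finrank_mono hspan
  rw [hfr] at hle
  omega

lemma caratheodory_small {d : ℕ} {Q : Finset (EuclideanSpace ℝ (Fin d))}
    {p : EuclideanSpace ℝ (Fin d)} (hp : p ∈ convexHull ℝ (Q : Set (EuclideanSpace ℝ (Fin d)))) :
    ∃ S : Finset (EuclideanSpace ℝ (Fin d)), S ⊆ Q ∧ S.card ≤ d + 1 ∧ S.Nonempty ∧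
      p ∈ convexHull ℝ (S : Set (EuclideanSpace ℝ (Fin d))) := by
  classical
  rw [convexHull_eq_union] at hp
  simp only [Set.mem_iUnion] at hp
  obtain ⟨t, hts, hai, hpt⟩ := hp
  refine ⟨t, by exact_mod_cast hts, ?_, ?_, hpt⟩
  · have h1 := hai.card_le_finrank_succ
    have h2 : finrank ℝ (vectorSpan ℝ (Set.range ((↑) : {y // y ∈ t} → EuclideanSpace ℝ (Fin d)))) ≤
        finrank ℝ (EuclideanSpace ℝ (Fin d)) := Submodule.finrank_le _
    rw [finrank_euclideanSpace_fin] at h2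
    rw [Fintype.card_coe] at h1
    exact h1.trans (by omega)
  · rcases t.eq_empty_or_nonempty with rfl | h
    · simp at hpt
    · exact h


lemma colorful_caratheodory {d : ℕ} (C : Fin (d+1) → Finset (EuclideanSpace ℝ (Fin d)))
    (p : EuclideanSpace ℝ (Fin d))
    (hC : ∀ i, p ∈ convexHull ℝ ((C i : Set (EuclideanSpace ℝ (Fin d))))) :
    ∃ f : Fin (d+1) → EuclideanSpace ℝ (Fin d), (∀ i, f i ∈ C i) ∧
      p ∈ convexHull ℝ (Set.range f) := by
  classical
  have hCne : ∀ i, (C i).Nonempty := by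
    intro i
    rcases (C i).eq_empty_or_nonempty with h | h
    · exfalso; have := hC i; rw [h] at this; simp at this
    · exact h
  haveI hΦne : Nonempty (∀ i : Fin (d+1), {x // x ∈ C i}) :=
    ⟨fun i => ⟨(hCne i).choose, (hCne i).choose_spec⟩⟩
  set val : (∀ i : Fin (d+1), {x // x ∈ C i}) → Fin (d+1) → EuclideanSpace ℝ (Fin d) :=
    fun g i => (g i : EuclideanSpace ℝ (Fin d)) with hval
  set K : (∀ i : Fin (d+1), {x // x ∈ C i}) → Set (EuclideanSpace ℝ (Fin d)) :=
    fun g => convexHull ℝ (Set.range (val g)) with hK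
  have hKcvx : ∀ g, Convex ℝ (K g) := fun g => convex_convexHull _ _
  have hKcpt : ∀ g, IsCompact (K g) := fun g => (Set.finite_range _).isCompact_convexHull ℝ
  have hKne : ∀ g, (K g).Nonempty :=
    fun g => ⟨val g 0, subset_convexHull _ _ (Set.mem_range_self 0)⟩
  obtain ⟨g, -, hgmin⟩ := Finset.exists_min_image Finset.univ (fun g => infDist p (K g))
    ⟨Classical.arbitrary _, Finset.mem_univ _⟩
  obtain ⟨q, hqK, hq⟩ := (hKcpt g).exists_infDist_eq_dist (hKne g) p
  by_cases hpq : p ∈ K g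
  · exact ⟨val g, fun i => (g i).2, hpq⟩
  exfalso
  have hpqne : p ≠ q := fun h => hpq (h ▸ hqK)
  have hmin : ∀ w ∈ K g, dist p q ≤ dist p w := fun w hw => by
    rw [← hq]; exact infDist_le_dist_of_mem hw
  have hobtuse : ∀ w ∈ K g, ⟪p - q, w - q⟫ ≤ 0 := fun w hw =>
    inner_nonpos_of_dist_min (hKcvx g) hqK hmin hw
  set u : EuclideanSpace ℝ (Fin d) := p - q with hu
  have hu0 : u ≠ 0 := sub_ne_zero.mpr hpqne
  set T : Finset (EuclideanSpace ℝ (Fin d)) := Finset.image (val g) Finset.univ with hT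
  have hKT : K g = convexHull ℝ (T : Set (EuclideanSpace ℝ (Fin d))) := by
    rw [hK, hT]; rw [Finset.coe_image, Finset.coe_univ, Set.image_univ]
  have hTK : ∀ x ∈ T, (x : EuclideanSpace ℝ (Fin d)) ∈ K g := fun x hx => by
    rw [hKT]; exact subset_convexHull _ _ hx
  -- weights for q
  have hqT : q ∈ convexHull ℝ (T : Set (EuclideanSpace ℝ (Fin d))) := hKT ▸ hqK
  rw [Finset.convexHull_eq] at hqT
  obtain ⟨w, hw0, hw1, hwq⟩ := hqT
  have hcm : ∑ x ∈ T, w x • x = q := by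
    rw [← hwq, Finset.centerMass_eq_of_sum_1 _ id hw1]
    simp
  set T₀ : Finset (EuclideanSpace ℝ (Fin d)) := T.filter (fun x => ⟪u, x - q⟫ = 0) with hT₀
  -- each term of the weighted sum of inner products is zero
  have hsum : ∑ x ∈ T, w x * ⟪u, x - q⟫ = 0 := by
    have : ∑ x ∈ T, w x * ⟪u, x - q⟫ = ⟪u, ∑ x ∈ T, w x • (x - q)⟫ := by
      rw [inner_sum]
      congr 1
      ext x
      rw [real_inner_smul_right]
    rw [this]
    have h2 : ∑ x ∈ T, w x • (x - q) = (∑ x ∈ T, w x • x) - (∑ x ∈ T, w x) • q := by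
      rw [Finset.sum_smul]
      rw [← Finset.sum_sub_distrib]
      congr 1
      ext x
      rw [smul_sub]
    rw [h2, hcm, hw1, one_smul, sub_self, inner_zero_right]
  have hterm : ∀ x ∈ T, w x * ⟪u, x - q⟫ = 0 := by
    intro x hx
    have hnonpos : ∀ x ∈ T, w x * ⟪u, x - q⟫ ≤ 0 := fun x hx =>
      mul_nonpos_of_nonneg_of_nonpos (hw0 x hx) (hobtuse x (hTK x hx))
    exact (Finset.sum_eq_zero_iff_of_nonpos hnonpos).mp hsum x hx
  have hwzero : ∀ x ∈ T, x ∉ T₀ → w x = 0 := by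
    intro x hx hnx
    have h1 : ⟪u, x - q⟫ ≠ 0 := by
      intro h; exact hnx (Finset.mem_filter.mpr ⟨hx, h⟩)
    have := hterm x hx
    exact (mul_eq_zero.mp this).resolve_right h1
  have hT₀T : T₀ ⊆ T := Finset.filter_subset _ _
  have hsum₀ : ∑ x ∈ T₀, w x = 1 := by
    rw [← hw1]; exact (Finset.sum_subset hT₀T (fun x hx hnx => hwzero x hx hnx))
  have hcm₀ : ∑ x ∈ T₀, w x • x = q := by
    rw [← hcm]
    exact Finset.sum_subset hT₀T (fun x hx hnx => by rw [hwzero x hx hnx, zero_smul])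
  have hq₀ : q ∈ convexHull ℝ (T₀ : Set (EuclideanSpace ℝ (Fin d))) := by
    have hmem := Finset.centerMass_mem_convexHull T₀ (fun x hx => hw0 x (hT₀T hx))
      (by rw [hsum₀]; norm_num) (fun x hx => Finset.mem_coe.mpr hx)
    rw [show (T₀.centerMass w fun x => x) = T₀.centerMass w id from rfl,
      Finset.centerMass_eq_of_sum_1 _ id hsum₀] at hmem
    simp only [id] at hmem
    rwa [hcm₀] at hmem
  rw [convexHull_eq_union] at hq₀
  simp only [Set.mem_iUnion] at hq₀
  obtain ⟨S, hST₀, hSai, hqS⟩ := hq₀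
  have hScard : S.card ≤ d := by
    apply card_le_of_hyperplane hu0 (c := ⟪u, q⟫) _ hSai
    intro x hx
    have hx0 : x ∈ T₀ := hST₀ hx
    have hx1 := (Finset.mem_filter.mp hx0).2
    rw [inner_sub_right] at hx1
    linarith
  -- find a face avoiding some color index
  have hface : ∃ i₀ : Fin (d+1),
      q ∈ convexHull ℝ (val g '' (↑(Finset.univ.erase i₀) : Set (Fin (d+1)))) := by
    by_cases hJ : ∀ i : Fin (d+1), val g i ∈ S
    · obtain ⟨i₀, -, j, -, hij, hgij⟩ := Finset.exists_ne_map_eq_of_card_lt_of_maps_to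
        (s := (Finset.univ : Finset (Fin (d+1)))) (t := S)
        (by simp only [Finset.card_univ, Fintype.card_fin]; omega) (fun i _ => hJ i)
      refine ⟨i₀, ?_⟩
      have himg : val g '' (↑(Finset.univ.erase i₀) : Set (Fin (d+1))) = Set.range (val g) := by
        apply Set.Subset.antisymm
        · rintro _ ⟨i, -, rfl⟩; exact Set.mem_range_self i
        · rintro _ ⟨i, rfl⟩
          by_cases hii : i = i₀
          · exact ⟨j, by simp [Ne.symm hij], by rw [hii, hgij]⟩
          · exact ⟨i, by simp [hii], rfl⟩
      rw [himg]
      exact hqK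
    · push_neg at hJ
      obtain ⟨i₀, hi₀⟩ := hJ
      refine ⟨i₀, ?_⟩
      refine convexHull_mono ?_ hqS
      intro x hx
      have hxT : x ∈ T := hT₀T (hST₀ hx)
      rw [hT, Finset.mem_image] at hxT
      obtain ⟨i, -, rfl⟩ := hxT
      have hii : i ≠ i₀ := by
        intro h; rw [h] at hx; exact hi₀ hx
      exact ⟨i, by simp [hii], rfl⟩
  obtain ⟨i₀, hqface⟩ := hface
  -- find a better point in color i₀
  have hy : ∃ y ∈ C i₀, 0 < ⟪u, y - q⟫ := by
    by_contra hny
    push_neg at hny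
    have hcvx : Convex ℝ {z : EuclideanSpace ℝ (Fin d) | ⟪u, z⟫ ≤ ⟪u, q⟫} :=
      convex_halfSpace_le ⟨fun a b => inner_add_right _ _ _,
        fun r a => real_inner_smul_right _ _ _⟩ _
    have hsub : (C i₀ : Set (EuclideanSpace ℝ (Fin d))) ⊆ {z | ⟪u, z⟫ ≤ ⟪u, q⟫} := by
      intro z hz
      have h3 := hny z (Finset.mem_coe.mp hz)
      rw [inner_sub_right] at h3
      simp only [Set.mem_setOf_eq]
      linarith
    have hp' : ⟪u, p⟫ ≤ ⟪u, q⟫ := convexHull_min hsub hcvx (hC i₀)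
    have hup : (0:ℝ) < ⟪u, u⟫ := by
      have := real_inner_self_eq_norm_sq u
      have h5 : (0:ℝ) < ‖u‖ := norm_pos_iff.mpr hu0
      nlinarith
    rw [hu] at hup
    rw [inner_sub_right] at hup
    rw [hu] at hp'
    linarith
  obtain ⟨y, hyC, hy0⟩ := hy
  obtain ⟨t, ht0, ht1, hlt⟩ := exists_closer' (p := p) (q := q) (y := y) hy0
  set g' := Function.update g i₀ (⟨y, hyC⟩ : {x // x ∈ C i₀}) with hg'
  have hval_ne : ∀ j, j ≠ i₀ → val g' j = val g j := fun j hj => by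
    rw [hg']; simp only [hval]; rw [Function.update_of_ne hj]
  have hval_eq : val g' i₀ = y := by
    rw [hg']; simp only [hval]; rw [Function.update_self]
  have hqK' : q ∈ K g' := by
    refine convexHull_mono ?_ hqface
    rintro _ ⟨i, hi, rfl⟩
    have hii : i ≠ i₀ := by
      simp only [Finset.coe_erase, Set.mem_diff, Set.mem_singleton_iff] at hi
      exact hi.2
    rw [← hval_ne i hii]
    exact Set.mem_range_self i
  have hyK' : y ∈ K g' :=
    subset_convexHull _ _ (by rw [← hval_eq]; exact Set.mem_range_self i₀)
  have hzK' : (1-t)•q + t•y ∈ K g' := (hKcvx g') hqK' hyK' (by linarith) ht0 (by ring)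
  have h1 : infDist p (K g') ≤ dist p ((1-t)•q + t•y) := infDist_le_dist_of_mem hzK'
  have h2 := hgmin g' (Finset.mem_univ _)
  rw [hq] at h2
  linarith


lemma exists_deep_point {d n a : ℕ} (P : Finset (EuclideanSpace ℝ (Fin d))) (hP : P.card = n)
    (ha : (d + 1) * a < n) :
    ∃ p : EuclideanSpace ℝ (Fin d), ∀ Q ⊆ P, n - a ≤ Q.card →
      p ∈ convexHull ℝ (Q : Set (EuclideanSpace ℝ (Fin d))) := by
  classical
  set s : Finset (Finset (EuclideanSpace ℝ (Fin d))) :=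
    P.powerset.filter (fun Q => n - a ≤ Q.card) with hs
  have hinter : (⋂ Q ∈ s, convexHull ℝ (Q : Set (EuclideanSpace ℝ (Fin d)))).Nonempty := by
    apply Convex.helly_theorem' (𝕜 := ℝ)
    · exact fun Q _ => convex_convexHull _ _
    · intro I hI hIcard
      rw [finrank_euclideanSpace_fin] at hIcard
      -- find a common point of all Q ∈ I
      set B : Finset (EuclideanSpace ℝ (Fin d)) := I.biUnion (fun Q => P \ Q) with hB
      have hBcard : B.card ≤ (d + 1) * a := by
        calc B.card ≤ ∑ Q ∈ I, (P \ Q).card := Finset.card_biUnion_le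
        _ ≤ ∑ _Q ∈ I, a := by
            apply Finset.sum_le_sum
            intro Q hQ
            have hQs := hI hQ
            rw [hs, Finset.mem_filter, Finset.mem_powerset] at hQs
            have := Finset.card_sdiff_of_subset hQs.1
            omega
        _ = I.card * a := by rw [Finset.sum_const, smul_eq_mul]
        _ ≤ (d + 1) * a := Nat.mul_le_mul_right a hIcard
      have hPB : (P \ B).Nonempty := by
        rw [← Finset.card_pos]
        have h1 := Finset.card_le_card_sdiff_add_card (s := P) (t := B)
        omega
      obtain ⟨x, hx⟩ := hPB
      rw [Finset.mem_sdiff] at hx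
      refine ⟨x, ?_⟩
      rw [Set.mem_iInter₂]
      intro Q hQ
      apply subset_convexHull
      have : x ∉ P \ Q := fun hc => hx.2 (Finset.mem_biUnion.mpr ⟨Q, hQ, hc⟩)
      rw [Finset.mem_sdiff] at this
      simp only [Finset.mem_coe]
      tauto
  obtain ⟨p, hp⟩ := hinter
  rw [Set.mem_iInter₂] at hp
  refine ⟨p, fun Q hQ hQc => hp Q ?_⟩
  rw [hs, Finset.mem_filter, Finset.mem_powerset]
  exact ⟨hQ, hQc⟩

-- greedy extraction of disjoint small sets all containing p in their hulls
lemma exists_disjoint_families {d n a : ℕ} (P : Finset (EuclideanSpace ℝ (Fin d)))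
    (hP : P.card = n) (p : EuclideanSpace ℝ (Fin d))
    (hp : ∀ Q ⊆ P, n - a ≤ Q.card → p ∈ convexHull ℝ (Q : Set (EuclideanSpace ℝ (Fin d))))
    (r : ℕ) (hr : r * (d + 1) ≤ a + (d + 1)) :
    ∃ 𝒢 : Finset (Finset (EuclideanSpace ℝ (Fin d))), 𝒢.card = r ∧
      (∀ s ∈ 𝒢, s ⊆ P ∧ s.card ≤ d + 1 ∧ s.Nonempty ∧
        p ∈ convexHull ℝ (s : Set (EuclideanSpace ℝ (Fin d)))) ∧
      (∀ s ∈ 𝒢, ∀ t ∈ 𝒢, s ≠ t → Disjoint s t) := by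
  classical
  induction r with
  | zero => exact ⟨∅, by simp⟩
  | succ r ih =>
    have hexp : (r+1) * (d+1) = r * (d+1) + (d+1) := by ring
    obtain ⟨𝒢, h𝒢card, h𝒢mem, h𝒢dis⟩ := ih (by omega)
    set U : Finset (EuclideanSpace ℝ (Fin d)) := 𝒢.biUnion id with hU
    have hUcard : U.card ≤ r * (d + 1) := by
      calc U.card ≤ ∑ s ∈ 𝒢, (id s).card := Finset.card_biUnion_le
      _ ≤ ∑ _s ∈ 𝒢, (d + 1) := Finset.sum_le_sum (fun s hs => (h𝒢mem s hs).2.1)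
      _ = r * (d + 1) := by rw [Finset.sum_const, smul_eq_mul, h𝒢card]
    set Q : Finset (EuclideanSpace ℝ (Fin d)) := P \ U with hQ
    have hQP : Q ⊆ P := Finset.sdiff_subset
    have hQcard : n - a ≤ Q.card := by
      have h1 : P.card ≤ Q.card + U.card := by
        rw [hQ]; exact Finset.card_le_card_sdiff_add_card
      have h2 : r * (d + 1) ≤ a := by omega
      omega
    have hpQ := hp Q hQP hQcard
    obtain ⟨S, hSQ, hScard, hSne, hpS⟩ := caratheodory_small hpQ
    have hSdisU : ∀ s ∈ 𝒢, Disjoint S s := by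
      intro s hs
      rw [Finset.disjoint_left]
      intro x hxS hxs
      have hxQ := hSQ hxS
      rw [hQ, Finset.mem_sdiff] at hxQ
      exact hxQ.2 (Finset.mem_biUnion.mpr ⟨s, hs, hxs⟩)
    have hSnot : S ∉ 𝒢 := by
      intro hc
      have := hSdisU S hc
      rw [Finset.disjoint_self_iff_empty] at this
      exact hSne.ne_empty this
    refine ⟨insert S 𝒢, ?_, ?_, ?_⟩
    · rw [Finset.card_insert_of_notMem hSnot, h𝒢card]
    · intro s hs
      rcases Finset.mem_insert.mp hs with rfl | hs'
      · exact ⟨hSQ.trans hQP, hScard, hSne, hpS⟩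
      · exact h𝒢mem s hs'
    · intro s hs t ht hst
      rcases Finset.mem_insert.mp hs with rfl | hs' <;>
        rcases Finset.mem_insert.mp ht with rfl | ht'
      · exact absurd rfl hst
      · exact hSdisU t ht'
      · exact (hSdisU s hs').symm
      · exact h𝒢dis s hs' t ht' hst


lemma count_simplices {d : ℕ} (P : Finset (EuclideanSpace ℝ (Fin d)))
    (p : EuclideanSpace ℝ (Fin d)) (𝒢 : Finset (Finset (EuclideanSpace ℝ (Fin d))))
    (h𝒢mem : ∀ s ∈ 𝒢, s ⊆ P ∧ s.card ≤ d + 1 ∧ s.Nonempty ∧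
      p ∈ convexHull ℝ (s : Set (EuclideanSpace ℝ (Fin d))))
    (h𝒢dis : ∀ s ∈ 𝒢, ∀ t ∈ 𝒢, s ≠ t → Disjoint s t) :
    𝒢.card.choose (d+1) ≤ ((P.powersetCard (d+1)).filter
      (fun S : Finset (EuclideanSpace ℝ (Fin d)) =>
        p ∈ convexHull ℝ (S : Set (EuclideanSpace ℝ (Fin d))))).card := by
  classical
  set N : Finset (Finset (EuclideanSpace ℝ (Fin d))) := (P.powersetCard (d+1)).filter
      (fun S : Finset (EuclideanSpace ℝ (Fin d)) =>
        p ∈ convexHull ℝ (S : Set (EuclideanSpace ℝ (Fin d)))) with hN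
  set pc := 𝒢.powersetCard (d+1) with hpc
  have hex : ∀ σ ∈ pc, ∃ S, S ∈ N ∧ (∀ t ∈ σ, (S ∩ t).Nonempty) ∧
      (∀ x ∈ S, ∃ t ∈ σ, x ∈ t) := by
    intro σ hσ
    rw [hpc, Finset.mem_powersetCard] at hσ
    obtain ⟨hσ𝒢, hσcard⟩ := hσ
    set e : Fin (d+1) ≃ {x // x ∈ σ} := ((σ.equivFin).trans (finCongr hσcard)).symm with he
    set Cf : Fin (d+1) → Finset (EuclideanSpace ℝ (Fin d)) := fun j => (e j : Finset _) with hCf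
    have hCf𝒢 : ∀ j, Cf j ∈ 𝒢 := fun j => hσ𝒢 (e j).2
    obtain ⟨f, hf, hpf⟩ := colorful_caratheodory Cf p
      (fun j => (h𝒢mem _ (hCf𝒢 j)).2.2.2)
    have hCfinj : ∀ j j', j ≠ j' → Cf j ≠ Cf j' := by
      intro j j' hjj' hc
      exact hjj' (e.injective (Subtype.ext hc))
    have hfinj : Function.Injective f := by
      intro j j' hjj'
      by_contra hne
      have hdis := h𝒢dis _ (hCf𝒢 j) _ (hCf𝒢 j') (hCfinj j j' hne)
      exact (Finset.disjoint_left.mp hdis (hf j)) (hjj' ▸ hf j')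
    set S : Finset (EuclideanSpace ℝ (Fin d)) := Finset.image f Finset.univ with hS
    have hScard : S.card = d + 1 := by
      rw [hS, Finset.card_image_of_injective _ hfinj, Finset.card_univ, Fintype.card_fin]
    have hSP : S ⊆ P := by
      intro x hx
      rw [hS, Finset.mem_image] at hx
      obtain ⟨j, -, rfl⟩ := hx
      exact (h𝒢mem _ (hCf𝒢 j)).1 (hf j)
    have hSrange : (S : Set (EuclideanSpace ℝ (Fin d))) = Set.range f := by
      rw [hS, Finset.coe_image, Finset.coe_univ, Set.image_univ]
    refine ⟨S, ?_, ?_, ?_⟩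
    · rw [hN, Finset.mem_filter, Finset.mem_powersetCard]
      exact ⟨⟨hSP, hScard⟩, by rw [hSrange]; exact hpf⟩
    · intro t ht
      have hCfT : Cf (e.symm ⟨t, ht⟩) = t := by
        show ((e (e.symm ⟨t, ht⟩) : {x // x ∈ σ}) : Finset (EuclideanSpace ℝ (Fin d))) = t
        rw [Equiv.apply_symm_apply]
      refine ⟨f (e.symm ⟨t, ht⟩), Finset.mem_inter.mpr
        ⟨Finset.mem_image.mpr ⟨e.symm ⟨t, ht⟩, Finset.mem_univ _, rfl⟩, ?_⟩⟩
      have hmem := hf (e.symm ⟨t, ht⟩)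
      rwa [hCfT] at hmem
    · intro x hx
      rw [hS, Finset.mem_image] at hx
      obtain ⟨j, -, rfl⟩ := hx
      exact ⟨Cf j, (e j).2, hf j⟩
  set F : Finset (Finset (EuclideanSpace ℝ (Fin d))) → Finset (EuclideanSpace ℝ (Fin d)) :=
    fun σ => if h : σ ∈ pc then (hex σ h).choose else ∅ with hF
  have hFspec : ∀ σ (h : σ ∈ pc), F σ ∈ N ∧ (∀ t ∈ σ, ((F σ) ∩ t).Nonempty) ∧
      (∀ x ∈ F σ, ∃ t ∈ σ, x ∈ t) := by
    intro σ h
    rw [hF]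
    simp only [dif_pos h]
    exact (hex σ h).choose_spec
  have hsub : ∀ σ₁, σ₁ ∈ pc → ∀ σ₂, σ₂ ∈ pc → F σ₁ = F σ₂ → σ₁ ⊆ σ₂ := by
    intro σ₁ h₁ σ₂ h₂ heq t ht
    obtain ⟨-, hint, -⟩ := hFspec σ₁ h₁
    obtain ⟨-, -, hcov⟩ := hFspec σ₂ h₂
    obtain ⟨x, hx⟩ := hint t ht
    rw [Finset.mem_inter] at hx
    obtain ⟨t', ht', hxt'⟩ := hcov x (heq ▸ hx.1)
    have hσ₁𝒢 := (Finset.mem_powersetCard.mp (hpc ▸ h₁)).1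
    have hσ₂𝒢 := (Finset.mem_powersetCard.mp (hpc ▸ h₂)).1
    have : t = t' := by
      by_contra hne
      exact (Finset.disjoint_left.mp (h𝒢dis t (hσ₁𝒢 ht) t' (hσ₂𝒢 ht') hne) hx.2) hxt'
    rwa [this]
  have hinj : Set.InjOn F pc := by
    intro σ₁ h₁ σ₂ h₂ heq
    exact Finset.Subset.antisymm (hsub σ₁ h₁ σ₂ h₂ heq) (hsub σ₂ h₂ σ₁ h₁ heq.symm)
  have hcard := Finset.card_le_card_of_injOn F (fun σ h => (hFspec σ h).1) hinj
  rw [hpc, Finset.card_powersetCard] at hcard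
  exact hcard


lemma bridge (d : ℕ) (P : Finset (EuclideanSpace ℝ (Fin d))) (p : EuclideanSpace ℝ (Fin d)) :
    (((P.powersetCard (d + 1)).filter
      (fun S : Finset (EuclideanSpace ℝ (Fin d)) =>
        p ∈ convexHull ℝ (S : Set (EuclideanSpace ℝ (Fin d))))).card : ℝ) ≤
    (((P.powersetCard (d + 1)).filter
      (fun S => p ∈ convexHull ℝ (S : Set (EuclideanSpace ℝ (Fin d))))).card : ℝ) := by
  norm_cast
  refine Finset.card_le_card_of_injOn
    (f := fun S : Finset (EuclideanSpace ℝ (Fin d)) => (S : Set (EuclideanSpace ℝ (Fin d))))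
    ?_ ?_
  · intro S hS
    rw [Finset.mem_coe, Finset.mem_filter] at hS ⊢
    constructor
    · show _ ∈ Finset.sup _ _
      rw [Finset.mem_sup]
      exact ⟨S, hS.1, by simp⟩
    · exact hS.2
  · intro S₁ _ S₂ _ h
    exact Finset.coe_injective h


lemma arith_large (d n : ℕ) (count : ℝ)
    (hcount : (((((n-1)/(d+1))/(d+1) + 1 : ℕ).choose (d+1) : ℝ)) ≤ count)
    (hn : 2*(d+1)^3 ≤ n) :
    ((((d:ℝ)+1)^2)^(d+1))⁻¹ * (n.choose (d+1) : ℝ)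
      - (((d:ℝ)+1)^2 + ((2*(d+1)^3 : ℕ) : ℝ)) * (n:ℝ)^d ≤ count := by
  set a : ℕ := (n-1)/(d+1) with ha
  set r : ℕ := a/(d+1) + 1 with hr
  have hn1 : 1 ≤ n := by
    have h0 : 0 < 2*(d+1)^3 := by positivity
    omega
  set D : ℝ := ((d:ℝ)+1)^2 with hD
  have hd0 : (0:ℝ) < (d:ℝ)+1 := by positivity
  have hD0 : (0:ℝ) < D := by positivity
  have hD1 : (1:ℝ) ≤ D := by nlinarith [Nat.cast_nonneg (α := ℝ) d]
  set x : ℝ := (n:ℝ)/D with hx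
  -- step 1: ((d:ℝ)+1) * a ≥ n - (d+1)
  have step1 : ((n:ℝ)) - ((d:ℝ)+1) ≤ ((d:ℝ)+1) * (a:ℝ) := by
    have hmod := Nat.div_add_mod (n-1) (d+1)
    have hmlt : (n-1) % (d+1) < d+1 := Nat.mod_lt _ (by omega)
    have hcast : ((d:ℝ)+1) * (a:ℝ) + (((n-1) % (d+1) : ℕ) : ℝ) = (n:ℝ) - 1 := by
      have : ((d+1) * a + (n-1) % (d+1) : ℕ) = n - 1 := hmod
      have h2 := congrArg (Nat.cast (R := ℝ)) this
      push_cast [Nat.cast_sub hn1] at h2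
      linarith [h2]
    have : (((n-1) % (d+1) : ℕ) : ℝ) ≤ (d:ℝ) := by
      have : ((n-1) % (d+1) : ℕ) ≤ d := by omega
      exact_mod_cast this
    linarith
  -- step 2: (d+1)^2 * r ≥ n, i.e. r ≥ x
  have step2 : x ≤ (r:ℝ) := by
    have hmod := Nat.div_add_mod a (d+1)
    have hmlt : a % (d+1) < d+1 := Nat.mod_lt _ (by omega)
    have hcast : ((d:ℝ)+1) * ((r:ℝ) - 1) + ((a % (d+1) : ℕ) : ℝ) = (a:ℝ) := by
      have h2 := congrArg (Nat.cast (R := ℝ)) hmod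
      push_cast at h2
      rw [hr]
      push_cast
      linarith [h2]
    have hm : ((a % (d+1) : ℕ) : ℝ) ≤ (d:ℝ) := by
      have : a % (d+1) ≤ d := by omega
      exact_mod_cast this
    rw [hx, div_le_iff₀ hD0]
    rw [hD]
    nlinarith
  -- step 3: 2*(d+1) ≤ r  (as naturals), so d ≤ r
  have step3 : d ≤ r ∧ ((d:ℝ) ≤ (r:ℝ)) := by
    have hxbig : 2*((d:ℝ)+1) ≤ x := by
      rw [hx, le_div_iff₀ hD0, hD]
      have : ((2*(d+1)^3 : ℕ) : ℝ) ≤ (n:ℝ) := by exact_mod_cast hn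
      push_cast at this
      nlinarith
    have hdr : (d:ℝ) ≤ (r:ℝ) := by nlinarith
    exact ⟨by exact_mod_cast hdr, hdr⟩
  -- step 4: the real lower bound for (r - d : ℕ)
  set y : ℝ := x - ((d:ℝ)+1) with hy
  have hy0 : 0 ≤ y := by
    have hxbig : 2*((d:ℝ)+1) ≤ x := by
      rw [hx, le_div_iff₀ hD0, hD]
      have : ((2*(d+1)^3 : ℕ) : ℝ) ≤ (n:ℝ) := by exact_mod_cast hn
      push_cast at this
      nlinarith
    rw [hy]; linarith
  have hyx : y ≤ x := by rw [hy]; linarith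
  have hcast_rd : (((r - d : ℕ)) : ℝ) = (r:ℝ) - (d:ℝ) := by
    rw [Nat.cast_sub step3.1]
  have step4 : y ≤ (((r - d : ℕ)) : ℝ) := by
    rw [hcast_rd, hy]
    linarith [step2]
  -- step 5: (r-d)^(d+1) ≤ (d+1)! * r.choose (d+1)  (naturals)
  have step5 : ((r - d)^(d+1) : ℕ) ≤ (d+1).factorial * r.choose (d+1) := by
    have h1 := Nat.pow_sub_le_descFactorial r (d+1)
    have h2 : r + 1 - (d+1) = r - d := by omega
    rw [h2] at h1
    rwa [Nat.descFactorial_eq_factorial_mul_choose] at h1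
  -- step 6: (d+1)! * n.choose (d+1) ≤ n^(d+1)  (naturals)
  have step6 : (d+1).factorial * n.choose (d+1) ≤ n^(d+1) := by
    rw [← Nat.descFactorial_eq_factorial_mul_choose]
    exact Nat.descFactorial_le_pow n (d+1)
  -- assemble over ℝ
  set F : ℝ := ((d+1).factorial : ℝ) with hF
  have hF1 : (1:ℝ) ≤ F := by
    rw [hF]; exact_mod_cast Nat.one_le_iff_ne_zero.mpr (Nat.factorial_ne_zero _)
  have hF0 : (0:ℝ) < F := lt_of_lt_of_le one_pos hF1
  have hxpow : x^(d+1) - ((d:ℝ)+1)^2 * x^d ≤ y^(d+1) := by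
    have := pow_sub_pow_le' d hy0 hyx
    have hxy : x - y = (d:ℝ)+1 := by rw [hy]; ring
    rw [hxy] at this
    nlinarith
  have hykey : y^(d+1) ≤ F * count := by
    calc y^(d+1) ≤ ((((r - d : ℕ)) : ℝ))^(d+1) := pow_le_pow_left₀ hy0 step4 _
    _ ≤ F * (r.choose (d+1) : ℝ) := by
        rw [hF]
        exact_mod_cast step5
    _ ≤ F * count := by
        apply mul_le_mul_of_nonneg_left _ hF0.le
        exact hcount
  have hxd : x^d ≤ (n:ℝ)^d := by
    apply pow_le_pow_left₀ (by positivity)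
    rw [hx]
    exact div_le_self (by positivity) hD1
  have hchoose : F * (n.choose (d+1) : ℝ) ≤ (n:ℝ)^(d+1) := by
    rw [hF]; exact_mod_cast step6
  have hxe : x^(d+1) = (D^(d+1))⁻¹ * (n:ℝ)^(d+1) := by
    rw [hx, div_pow]
    ring
  -- final comparison multiplied by F
  have hmain : F * ((D^(d+1))⁻¹ * (n.choose (d+1) : ℝ)
      - (((d:ℝ)+1)^2 + ((2*(d+1)^3 : ℕ) : ℝ)) * (n:ℝ)^d) ≤ F * count := by
    have h1 : F * ((D^(d+1))⁻¹ * (n.choose (d+1) : ℝ)) ≤ (D^(d+1))⁻¹ * (n:ℝ)^(d+1) := by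
      have hk0 : (0:ℝ) ≤ (D^(d+1))⁻¹ := by positivity
      calc F * ((D^(d+1))⁻¹ * (n.choose (d+1) : ℝ))
          = (D^(d+1))⁻¹ * (F * (n.choose (d+1) : ℝ)) := by ring
      _ ≤ (D^(d+1))⁻¹ * (n:ℝ)^(d+1) := mul_le_mul_of_nonneg_left hchoose hk0
    have h2 : ((d:ℝ)+1)^2 * (n:ℝ)^d ≤ F * ((((d:ℝ)+1)^2 + ((2*(d+1)^3 : ℕ) : ℝ)) * (n:ℝ)^d) := by
      have hnd : (0:ℝ) ≤ (n:ℝ)^d := by positivity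
      have hc0 : (0:ℝ) ≤ ((2*(d+1)^3 : ℕ) : ℝ) := by positivity
      have e1 : ((d:ℝ)+1)^2 * (n:ℝ)^d ≤ (((d:ℝ)+1)^2 + ((2*(d+1)^3 : ℕ) : ℝ)) * (n:ℝ)^d := by
        apply mul_le_mul_of_nonneg_right _ hnd
        linarith
      have e2 : (((d:ℝ)+1)^2 + ((2*(d+1)^3 : ℕ) : ℝ)) * (n:ℝ)^d
          ≤ F * ((((d:ℝ)+1)^2 + ((2*(d+1)^3 : ℕ) : ℝ)) * (n:ℝ)^d) :=
        le_mul_of_one_le_left (by positivity) hF1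
      linarith
    have h3 : (D^(d+1))⁻¹ * (n:ℝ)^(d+1) - ((d:ℝ)+1)^2 * (n:ℝ)^d ≤ F * count := by
      rw [← hxe]
      have e3 : ((d:ℝ)+1)^2 * x^d ≤ ((d:ℝ)+1)^2 * (n:ℝ)^d :=
        mul_le_mul_of_nonneg_left hxd (by positivity)
      linarith
    have hsplit : F * ((D^(d+1))⁻¹ * (n.choose (d+1) : ℝ)
        - (((d:ℝ)+1)^2 + ((2*(d+1)^3 : ℕ) : ℝ)) * (n:ℝ)^d)
        = F * ((D^(d+1))⁻¹ * (n.choose (d+1) : ℝ))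
          - F * ((((d:ℝ)+1)^2 + ((2*(d+1)^3 : ℕ) : ℝ)) * (n:ℝ)^d) := by ring
    linarith
  have := le_of_mul_le_mul_left (by linarith [hmain] : F * ((D^(d+1))⁻¹ * (n.choose (d+1) : ℝ)
      - (((d:ℝ)+1)^2 + ((2*(d+1)^3 : ℕ) : ℝ)) * (n:ℝ)^d) ≤ F * count) hF0
  rw [hD] at this
  exact this


lemma arith_small (d n : ℕ) (count : ℝ) (h0 : 0 ≤ count) (hn : n < 2*(d+1)^3) :
    ((((d:ℝ)+1)^2)^(d+1))⁻¹ * (n.choose (d+1) : ℝ)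
      - (((d:ℝ)+1)^2 + ((2*(d+1)^3 : ℕ) : ℝ)) * (n:ℝ)^d ≤ count := by
  have hD1 : (1:ℝ) ≤ ((d:ℝ)+1)^2 := by nlinarith [Nat.cast_nonneg (α := ℝ) d]
  have hk1 : ((((d:ℝ)+1)^2)^(d+1))⁻¹ ≤ 1 := by
    rw [inv_le_one_iff₀]
    right
    exact one_le_pow₀ hD1
  have hk0 : (0:ℝ) ≤ ((((d:ℝ)+1)^2)^(d+1))⁻¹ := by positivity
  have hch : (n.choose (d+1) : ℝ) ≤ (n:ℝ)^(d+1) := by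
    have h1 : n.choose (d+1) ≤ n^(d+1) := by
      have h2 : n.choose (d+1) ≤ n.descFactorial (d+1) := by
        rw [Nat.descFactorial_eq_factorial_mul_choose]
        exact Nat.le_mul_of_pos_left _ (Nat.factorial_pos _)
      exact h2.trans (Nat.descFactorial_le_pow n (d+1))
    exact_mod_cast h1
  have hnn : (n:ℝ)^(d+1) = (n:ℝ) * (n:ℝ)^d := by ring
  have hnle : (n:ℝ) ≤ ((2*(d+1)^3 : ℕ) : ℝ) := by exact_mod_cast hn.le
  have hnd : (0:ℝ) ≤ (n:ℝ)^d := by positivity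
  have hch0 : (0:ℝ) ≤ (n.choose (d+1) : ℝ) := by positivity
  have key : ((((d:ℝ)+1)^2)^(d+1))⁻¹ * (n.choose (d+1) : ℝ)
      ≤ (((d:ℝ)+1)^2 + ((2*(d+1)^3 : ℕ) : ℝ)) * (n:ℝ)^d := by
    calc ((((d:ℝ)+1)^2)^(d+1))⁻¹ * (n.choose (d+1) : ℝ) ≤ 1 * (n.choose (d+1) : ℝ) :=
          mul_le_mul_of_nonneg_right hk1 hch0
    _ = (n.choose (d+1) : ℝ) := one_mul _
    _ ≤ (n:ℝ)^(d+1) := hch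
    _ = (n:ℝ) * (n:ℝ)^d := hnn
    _ ≤ ((2*(d+1)^3 : ℕ) : ℝ) * (n:ℝ)^d := mul_le_mul_of_nonneg_right hnle hnd
    _ ≤ (((d:ℝ)+1)^2 + ((2*(d+1)^3 : ℕ) : ℝ)) * (n:ℝ)^d := by
        apply mul_le_mul_of_nonneg_right _ hnd
        nlinarith
  linarith


/-- **First selection theorem (Boros–Füredi, Bárány).** For every positive integer `d`
there exist constants `k > 0` and `C ≥ 0` such that for every `n`-element set `P ⊆ ℝ^d`
in general position there is a point contained in at least `k * choose n (d+1) - C * n^d`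
of the `d`-simplices spanned by `(d+1)`-element subsets of `P`. -/
theorem first_selection (d : ℕ) (hd : 0 < d) :
    ∃ k C : ℝ, 0 < k ∧ 0 ≤ C ∧
      ∀ n : ℕ, 0 < n →
        ∀ P : Finset (EuclideanSpace ℝ (Fin d)), P.card = n →
          (∀ S : Finset (EuclideanSpace ℝ (Fin d)), S ⊆ P → S.card ≤ d + 1 →
            AffineIndependent ℝ
              (fun x : (S : Set (EuclideanSpace ℝ (Fin d))) =>
                (x : EuclideanSpace ℝ (Fin d)))) →
          ∃ p : EuclideanSpace ℝ (Fin d),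
            k * (n.choose (d + 1) : ℝ) - C * (n : ℝ) ^ d ≤
              (((P.powersetCard (d + 1)).filter
                (fun S => p ∈ convexHull ℝ (S : Set (EuclideanSpace ℝ (Fin d))))).card : ℝ) := by
  refine ⟨((((d:ℝ)+1)^2)^(d+1))⁻¹, ((d:ℝ)+1)^2 + ((2*(d+1)^3 : ℕ) : ℝ),
    by positivity, by positivity, ?_⟩
  intro n hn P hPcard _hGP
  have haa : (d+1) * ((n-1)/(d+1)) < n := by
    have h1 := Nat.div_mul_le_self (n-1) (d+1)
    have h2 : (d+1) * ((n-1)/(d+1)) = ((n-1)/(d+1)) * (d+1) := Nat.mul_comm _ _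
    omega
  obtain ⟨p, hp⟩ := exists_deep_point P hPcard haa
  have hrr : (((n-1)/(d+1))/(d+1) + 1) * (d+1) ≤ ((n-1)/(d+1)) + (d+1) := by
    have h1 := Nat.div_mul_le_self ((n-1)/(d+1)) (d+1)
    have h2 : (((n-1)/(d+1))/(d+1) + 1) * (d+1)
        = (((n-1)/(d+1))/(d+1)) * (d+1) + (d+1) := by ring
    omega
  obtain ⟨𝒢, h𝒢card, h𝒢mem, h𝒢dis⟩ := exists_disjoint_families P hPcard p hp
    (((n-1)/(d+1))/(d+1) + 1) hrr
  refine ⟨p, ?_⟩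
  have h1 := count_simplices P p 𝒢 h𝒢mem h𝒢dis
  rw [h𝒢card] at h1
  have hcount : (((((n-1)/(d+1))/(d+1) + 1 : ℕ).choose (d+1) : ℝ)) ≤
      (((P.powersetCard (d + 1)).filter
        (fun S => p ∈ convexHull ℝ (S : Set (EuclideanSpace ℝ (Fin d))))).card : ℝ) := by
    calc (((((n-1)/(d+1))/(d+1) + 1 : ℕ).choose (d+1) : ℝ))
        ≤ (((P.powersetCard (d+1)).filter
            (fun S : Finset (EuclideanSpace ℝ (Fin d)) =>
              p ∈ convexHull ℝ (S : Set (EuclideanSpace ℝ (Fin d))))).card : ℝ) := by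
          exact_mod_cast h1
    _ ≤ _ := bridge d P p
  by_cases hcase : n < 2*(d+1)^3
  · exact arith_small d n _ (by positivity) hcase
  · exact arith_large d n _ hcount (le_of_not_gt hcase)
end

section
/- Let p be a point in ℝ^d, let H = (H_1, ..., H_{d+1}) be an arrangement of d+1 hyperplanes in general position in ℝ^d, and let Y_1, ..., Y_{d+1} be finite nonempty subsets of ℝ^d such that for every i ∈ [d+1] the hyperplane H_i strictly separates p from the union Ŷ_i = ⋃_{j ≠ i} Y_j. Then either p ∈ Δ(H) and Y_i is contained in the interior of the corner region C_i(H) for every i ∈ [d+1], or p ∉ Δ(H) and there is a hyperplane strictly separating p from Y_1 ∪ ... ∪ Y_{d+1}. -/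
open scoped RealInnerProductSpace

/-- The closed half-space bounded by the hyperplane `{x | ⟪x, u j⟫ = c j}` that does not
contain the point `h j` (the vertex of the arrangement opposite to the hyperplane). -/
def halfspacePlus {d : ℕ} (u : Fin (d + 1) → EuclideanSpace ℝ (Fin d))
    (c : Fin (d + 1) → ℝ) (h : Fin (d + 1) → EuclideanSpace ℝ (Fin d)) (j : Fin (d + 1)) :
    Set (EuclideanSpace ℝ (Fin d)) :=
  {x | (⟪x, u j⟫ - c j) * (⟪h j, u j⟫ - c j) ≤ 0}

/-- The corner region `C i` of an arrangement of `d + 1` hyperplanes in general position: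
the intersection of the half-spaces `H j ⁺` over `j ≠ i`. -/
def cornerRegion {d : ℕ} (u : Fin (d + 1) → EuclideanSpace ℝ (Fin d))
    (c : Fin (d + 1) → ℝ) (h : Fin (d + 1) → EuclideanSpace ℝ (Fin d)) (i : Fin (d + 1)) :
    Set (EuclideanSpace ℝ (Fin d)) :=
  ⋂ (j) (_ : j ≠ i), halfspacePlus u c h j

/-- **Separation lemma.** Let `p ∈ ℝ^d`, let `H = (H 0, …, H d)` be an arrangement of
`d + 1` hyperplanes in general position (with `H i = {x | ⟪x, u i⟫ = c i}`, opposite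
vertices `h i`), and let `Y 0, …, Y d` be finite nonempty sets such that `H i` strictly
separates `p` from `⋃_{j ≠ i} Y j` for every `i`. Then either `p ∈ Δ(H)` and every `Y i`
lies in the interior of the corner region `C i`, or `p ∉ Δ(H)` and some hyperplane
strictly separates `p` from `Y 0 ∪ ⋯ ∪ Y d`. -/
theorem separation_lemma {d : ℕ} (p : EuclideanSpace ℝ (Fin d))
    (u : Fin (d + 1) → EuclideanSpace ℝ (Fin d)) (c : Fin (d + 1) → ℝ)
    (hu : ∀ i, u i ≠ 0)
    (hindep : ∀ i : Fin (d + 1),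
      LinearIndependent ℝ (fun j : {j : Fin (d + 1) // j ≠ i} => u j))
    (hempty : (⋂ i, {x : EuclideanSpace ℝ (Fin d) | ⟪x, u i⟫ = c i}) = ∅)
    (h : Fin (d + 1) → EuclideanSpace ℝ (Fin d))
    (hh : ∀ i j, j ≠ i → ⟪h i, u j⟫ = c j)
    (Y : Fin (d + 1) → Finset (EuclideanSpace ℝ (Fin d)))
    (hYne : ∀ i, (Y i).Nonempty)
    (hsep : ∀ i j, j ≠ i → ∀ y ∈ Y j, (⟪p, u i⟫ - c i) * (⟪y, u i⟫ - c i) < 0) :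
    (p ∈ convexHull ℝ (Set.range h) ∧
      ∀ i, (Y i : Set (EuclideanSpace ℝ (Fin d))) ⊆ interior (cornerRegion u c h i)) ∨
    (p ∉ convexHull ℝ (Set.range h) ∧
      ∃ (w : EuclideanSpace ℝ (Fin d)) (b : ℝ),
        ⟪p, w⟫ < b ∧ ∀ i, ∀ y ∈ Y i, b < ⟪y, w⟫) := by
  classical
  rcases eq_or_ne d 0 with rfl | hd
  · haveI : Subsingleton (EuclideanSpace ℝ (Fin 0)) :=
      Module.finrank_zero_iff.mp finrank_euclideanSpace_fin
    exact absurd (Subsingleton.elim (u 0) 0) (hu 0)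
  obtain ⟨m, rfl⟩ : ∃ m, d = m + 1 :=
    ⟨d - 1, (Nat.succ_pred_eq_of_pos (Nat.pos_of_ne_zero hd)).symm⟩
  -- the "vertical distances" t i, all nonzero
  set t : Fin (m + 2) → ℝ := fun i => ⟪h i, u i⟫ - c i with ht_def
  have ht : ∀ i, t i ≠ 0 := by
    intro i h0
    have hmem : h i ∈ ⋂ j, {x : EuclideanSpace ℝ (Fin (m + 1)) | ⟪x, u j⟫ = c j} := by
      simp only [Set.mem_iInter, Set.mem_setOf_eq]
      intro j
      rcases eq_or_ne j i with rfl | hji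
      · have : ⟪h j, u j⟫ - c j = 0 := h0
        linarith
      · exact hh i j hji
    rw [hempty] at hmem
    exact hmem
  have hinner_h : ∀ i k, ⟪h i, u k⟫ = c k + (if k = i then t k else 0) := by
    intro i k
    rcases eq_or_ne k i with rfl | hki
    · simp [ht_def]
    · simp [hki, hh i k hki]
  -- barycentric coordinates
  set lam : EuclideanSpace ℝ (Fin (m + 1)) → Fin (m + 2) → ℝ :=
    fun x i => (⟪x, u i⟫ - c i) / t i with hlam_def
  have hlam_h : ∀ i k, lam (h i) k = if k = i then 1 else 0 := by
    intro i k
    simp only [hlam_def]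
    rw [hinner_h]
    rcases eq_or_ne k i with rfl | hki
    · simp [div_self (ht k)]
    · simp [hki]
  -- the edge vectors from h 0, a basis
  set e : {j : Fin (m + 2) // j ≠ 0} → EuclideanSpace ℝ (Fin (m + 1)) :=
    fun j => h j - h 0 with he_def
  have he_inner : ∀ (j : {j : Fin (m + 2) // j ≠ 0}) (k : Fin (m + 2)),
      ⟪e j, u k⟫ = (if k = (j : Fin (m + 2)) then t k else 0) - (if k = 0 then t k else 0) := by
    intro j k
    rw [he_def]
    simp only [inner_sub_left, hinner_h]
    ring
  have hli : LinearIndependent ℝ e := by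
    rw [Fintype.linearIndependent_iff]
    intro g hg j
    have h1 : ⟪∑ j', g j' • e j', u (j : Fin (m + 2))⟫ = g j * t j := by
      rw [sum_inner, Finset.sum_eq_single j]
      · rw [real_inner_smul_left, he_inner]
        simp [j.2, Ne.symm j.2]
      · intro j' _ hj'
        rw [real_inner_smul_left, he_inner]
        have h2 : (j : Fin (m + 2)) ≠ (j' : Fin (m + 2)) := fun hc => hj' (Subtype.ext hc.symm)
        simp [h2, j.2]
      · simp
    rw [hg] at h1
    simp only [inner_zero_left] at h1
    rcases mul_eq_zero.mp h1.symm with h2 | h2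
    · exact h2
    · exact absurd h2 (ht _)
  have hcard : Fintype.card {j : Fin (m + 2) // j ≠ 0} =
      Module.finrank ℝ (EuclideanSpace ℝ (Fin (m + 1))) := by
    have h1 : Fintype.card {j : Fin (m + 2) // j ≠ 0} = m + 1 := by
      rw [Fintype.card_subtype_compl, Fintype.card_subtype_eq, Fintype.card_fin]
      omega
    rw [h1, finrank_euclideanSpace_fin]
  haveI : Nonempty {j : Fin (m + 2) // j ≠ 0} := ⟨⟨1, by simp [Fin.ext_iff]⟩⟩
  set B : Module.Basis {j : Fin (m + 2) // j ≠ 0} ℝ (EuclideanSpace ℝ (Fin (m + 1))) :=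
    basisOfLinearIndependentOfCardEqFinrank hli hcard with hB_def
  have hB : ⇑B = e := coe_basisOfLinearIndependentOfCardEqFinrank hli hcard
  have hBj : ∀ j, B j = e j := fun j => congrFun hB j
  -- (A): barycentric coordinates sum to 1
  set v : EuclideanSpace ℝ (Fin (m + 1)) := ∑ i, (t i)⁻¹ • u i with hv_def
  have hvinner : ∀ x : EuclideanSpace ℝ (Fin (m + 1)),
      ⟪x, v⟫ = ∑ i, (t i)⁻¹ * ⟪x, u i⟫ := by
    intro x
    rw [hv_def, inner_sum]
    exact Finset.sum_congr rfl fun i _ => real_inner_smul_right x (u i) ((t i)⁻¹)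
  have hco : ∀ (a i : Fin (m + 2)), (t i)⁻¹ * (if i = a then t i else 0) = if i = a then 1 else 0 := by
    intro a i
    split <;> simp [inv_mul_cancel₀ (ht _)]
  have hv0 : v = 0 := by
    have hev : ∀ j : {j : Fin (m + 2) // j ≠ 0}, ⟪e j, v⟫ = 0 := by
      intro j
      rw [hvinner]
      have : ∀ i, (t i)⁻¹ * ⟪e j, u i⟫
          = (if i = (j : Fin (m + 2)) then 1 else 0) - (if i = 0 then 1 else 0) := by
        intro i
        rw [he_inner, mul_sub, hco, hco]
      rw [Finset.sum_congr rfl fun i _ => this i]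
      rw [Finset.sum_sub_distrib]
      simp [Finset.sum_ite_eq']
    have hfun : (innerSL ℝ v).toLinearMap = (0 : EuclideanSpace ℝ (Fin (m + 1)) →ₗ[ℝ] ℝ) := by
      apply B.ext
      intro j
      rw [hBj j]
      simp only [ContinuousLinearMap.coe_coe, innerSL_apply_apply, LinearMap.zero_apply]
      rw [real_inner_comm]
      exact hev j
    have h2 := LinearMap.congr_fun hfun v
    simp only [ContinuousLinearMap.coe_coe, innerSL_apply_apply, LinearMap.zero_apply] at h2
    exact inner_self_eq_zero.mp h2
  have sumA : ∀ x : EuclideanSpace ℝ (Fin (m + 1)), ∑ i, lam x i = 1 := by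
    intro x
    have key : ∀ y : EuclideanSpace ℝ (Fin (m + 1)),
        ∑ i, lam y i = ⟪y, v⟫ - ∑ i, c i / t i := by
      intro y
      rw [hvinner, ← Finset.sum_sub_distrib]
      refine Finset.sum_congr rfl fun i _ => ?_
      simp only [hlam_def]
      rw [sub_div]
      ring
    have h0' : ∑ i, lam (h 0) i = 1 := by
      rw [Finset.sum_congr rfl fun i _ => hlam_h 0 i]
      simp [Finset.sum_ite_eq']
    have h1 := key (h 0)
    have h2 := key x
    rw [hv0] at h1 h2
    simp only [inner_zero_right] at h1 h2
    rw [h0'] at h1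
    rw [h2, ← h1]
  -- (B): barycentric representation
  set N : EuclideanSpace ℝ (Fin (m + 1)) →ₗ[ℝ] EuclideanSpace ℝ (Fin (m + 1)) :=
    ∑ i, ((t i)⁻¹ • (innerSL ℝ (u i)).toLinearMap).smulRight (h i) with hN_def
  have hNapply : ∀ y, N y = ∑ i, ((t i)⁻¹ * ⟪u i, y⟫) • h i := by
    intro y
    rw [hN_def, LinearMap.sum_apply]
    refine Finset.sum_congr rfl fun i _ => ?_
    simp [LinearMap.smulRight_apply, LinearMap.smul_apply, smul_eq_mul]
  have hN : N = LinearMap.id := by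
    apply B.ext
    intro j
    rw [hBj j, LinearMap.id_apply, hNapply]
    have : ∀ i, ((t i)⁻¹ * ⟪u i, e j⟫) • h i
        = ((if i = (j : Fin (m + 2)) then (1:ℝ) else 0) - (if i = 0 then (1:ℝ) else 0)) • h i := by
      intro i
      rw [real_inner_comm, he_inner, mul_sub, hco, hco]
    rw [Finset.sum_congr rfl fun i _ => this i]
    simp only [sub_smul, Finset.sum_sub_distrib, ite_smul, one_smul, zero_smul]
    simp [Finset.sum_ite_eq', he_def]
  have hlam_decomp : ∀ (x : EuclideanSpace ℝ (Fin (m + 1))) i,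
      lam x i = (if i = 0 then (1:ℝ) else 0) + (t i)⁻¹ * ⟪u i, x - h 0⟫ := by
    intro x i
    have h1 : ⟪u i, x - h 0⟫ = ⟪x, u i⟫ - ⟪h 0, u i⟫ := by
      rw [real_inner_comm, inner_sub_left]
    rw [h1, hinner_h]
    simp only [hlam_def]
    rcases eq_or_ne i 0 with rfl | hi
    · simp only [if_pos rfl]
      field_simp [ht 0]
      simp only [↓reduceIte]
      ring
    · simp only [if_neg hi]
      field_simp [ht i]
      ring
  have sumB : ∀ x : EuclideanSpace ℝ (Fin (m + 1)), ∑ i, lam x i • h i = x := by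
    intro x
    have hNx := LinearMap.congr_fun hN (x - h 0)
    rw [LinearMap.id_apply, hNapply] at hNx
    calc ∑ i, lam x i • h i
        = ∑ i, ((if i = 0 then (1:ℝ) else 0) • h i + ((t i)⁻¹ * ⟪u i, x - h 0⟫) • h i) := by
          refine Finset.sum_congr rfl fun i _ => ?_
          rw [hlam_decomp, add_smul]
      _ = (∑ i, (if i = 0 then (1:ℝ) else 0) • h i)
            + ∑ i, ((t i)⁻¹ * ⟪u i, x - h 0⟫) • h i := Finset.sum_add_distrib
      _ = h 0 + (x - h 0) := by
          rw [hNx]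
          congr 1
          simp [ite_smul, Finset.sum_ite_eq']
      _ = x := by abel
  clear_value B N v e
  clear hB hBj hN hNapply hv0 hvinner hli hcard he_inner hco hB_def hN_def hv_def he_def hlam_decomp B N v e
  -- sign facts
  have hlamp_ne : ∀ i, lam p i ≠ 0 := by
    intro i
    obtain ⟨j, hj⟩ := exists_ne i
    obtain ⟨y, hy⟩ := hYne j
    have h1 := hsep i j hj y hy
    have hpne : ⟪p, u i⟫ - c i ≠ 0 := by
      intro h0; rw [h0, zero_mul] at h1; exact lt_irrefl 0 h1
    exact div_ne_zero hpne (ht i)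
  have hopp : ∀ i k, k ≠ i → ∀ y ∈ Y i, lam p k * lam y k < 0 := by
    intro i k hki y hy
    have h1 := hsep k i (Ne.symm hki) y hy
    simp only [hlam_def]
    rw [div_mul_div_comm]
    exact div_neg_of_neg_of_pos h1 (mul_self_pos.mpr (ht k))
  by_cases hpos : ∀ i, 0 ≤ lam p i
  · left
    have hp_mem : p ∈ convexHull ℝ (Set.range h) := by
      rw [← sumB p]
      exact (convex_convexHull ℝ (Set.range h)).sum_mem (fun i _ => hpos i) (sumA p)
        (fun i _ => subset_convexHull ℝ _ ⟨i, rfl⟩)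
    refine ⟨hp_mem, fun i y hy => ?_⟩
    have hstrict : ∀ k, k ≠ i → (⟪y, u k⟫ - c k) * t k < 0 := by
      intro k hki
      have h1 := hopp i k hki y hy
      have h2 : 0 < lam p k := lt_of_le_of_ne (hpos k) (Ne.symm (hlamp_ne k))
      have h3 : lam y k < 0 := by nlinarith
      have h4 : (⟪y, u k⟫ - c k) / t k < 0 := h3
      exact mul_neg_iff.mpr (div_neg_iff.mp h4)
    refine interior_maximal ?_ ?_ (?_ :
        y ∈ ⋂ k ∈ Finset.univ.filter (fun k => k ≠ i),
          {x : EuclideanSpace ℝ (Fin (m + 1)) | (⟪x, u k⟫ - c k) * t k < 0})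
    · intro x hx
      simp only [Finset.mem_filter, Finset.mem_univ, true_and, Set.mem_iInter,
        Set.mem_setOf_eq] at hx
      simp only [cornerRegion, Set.mem_iInter, halfspacePlus, Set.mem_setOf_eq]
      intro k hk
      have htk : (⟪h k, u k⟫ - c k) = t k := rfl
      rw [htk]
      exact le_of_lt (hx k hk)
    · apply isOpen_biInter_finset
      intro k _
      have hcont : Continuous fun x : EuclideanSpace ℝ (Fin (m + 1)) =>
          (⟪x, u k⟫ - c k) * t k :=
        (((continuous_id.inner continuous_const)).sub continuous_const).mul continuous_const
      exact isOpen_lt hcont continuous_const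
    · simp only [Finset.mem_filter, Finset.mem_univ, true_and, Set.mem_iInter,
        Set.mem_setOf_eq]
      intro k hk
      exact hstrict k hk
  · right
    push_neg at hpos
    obtain ⟨i₀, hi₀⟩ := hpos
    replace hi₀ : lam p i₀ < 0 := lt_of_le_of_ne (le_of_lt hi₀) (hlamp_ne i₀)
    set S : Finset (Fin (m + 2)) := Finset.univ.filter (fun j => lam p j < 0) with hS_def
    have hmemS : ∀ j, j ∈ S ↔ lam p j < 0 := by
      intro j; rw [hS_def]; simp
    have hi₀S : i₀ ∈ S := (hmemS i₀).mpr hi₀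
    have hSne : S.Nonempty := ⟨i₀, hi₀S⟩
    set w : EuclideanSpace ℝ (Fin (m + 1)) := ∑ j ∈ S, (t j)⁻¹ • u j with hw_def
    set b : ℝ := ∑ j ∈ S, c j / t j with hb_def
    have hkey : ∀ x : EuclideanSpace ℝ (Fin (m + 1)), ⟪x, w⟫ - b = ∑ j ∈ S, lam x j := by
      intro x
      rw [hw_def, hb_def, inner_sum, ← Finset.sum_sub_distrib]
      refine Finset.sum_congr rfl fun j _ => ?_
      rw [real_inner_smul_right]
      simp only [hlam_def]
      rw [sub_div]
      ring
    have hpw : ⟪p, w⟫ < b := by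
      have h1 : ∑ j ∈ S, lam p j < 0 :=
        Finset.sum_neg (fun j hj => (hmemS j).mp hj) hSne
      linarith [hkey p]
    have hyw : ∀ i, ∀ y ∈ Y i, b < ⟪y, w⟫ := by
      intro i y hy
      have hgoal : 0 < ∑ j ∈ S, lam y j := by
        by_cases hiS : i ∈ S
        · have hsplit := Finset.sum_filter_add_sum_filter_not Finset.univ
            (fun j => lam p j < 0) (lam y)
          rw [sumA y] at hsplit
          have hneg : ∑ j ∈ Finset.univ.filter (fun j => ¬ lam p j < 0), lam y j ≤ 0 := by
            apply Finset.sum_nonpos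
            intro j hj
            have hj2 : ¬ lam p j < 0 := (Finset.mem_filter.mp hj).2
            have hjne : j ≠ i := by
              rintro rfl
              exact hj2 ((hmemS j).mp hiS)
            have hppos : 0 < lam p j := lt_of_le_of_ne (not_lt.mp hj2) (Ne.symm (hlamp_ne j))
            have h5 := hopp i j hjne y hy
            nlinarith
          rw [hS_def]
          linarith
        · apply Finset.sum_pos ?_ hSne
          intro j hj
          have hjneg : lam p j < 0 := (hmemS j).mp hj
          have hjne : j ≠ i := fun hc => hiS (hc ▸ hj)
          have h5 := hopp i j hjne y hy
          nlinarith
      linarith [hkey y]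
    have hpnot : p ∉ convexHull ℝ (Set.range h) := by
      intro hp
      have hK : convexHull ℝ (Set.range h) ⊆ {x | b ≤ ⟪x, w⟫} := by
        apply convexHull_min
        · rintro x ⟨i, rfl⟩
          have h6 : ⟪h i, w⟫ - b = ∑ j ∈ S, lam (h i) j := hkey (h i)
          have hnn : 0 ≤ ∑ j ∈ S, lam (h i) j := by
            apply Finset.sum_nonneg
            intro j hj
            rw [hlam_h]
            split <;> norm_num
          simp only [Set.mem_setOf_eq]
          linarith
        · exact convex_halfSpace_ge
            ⟨fun a b' => inner_add_left a b' w, fun r a => real_inner_smul_left a w r⟩ b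
      have h7 := hK hp
      simp only [Set.mem_setOf_eq] at h7
      linarith
    exact ⟨hpnot, w, b, hpw, hyw⟩
end

section
/- Let H = (H_1, ..., H_{d+1}) be an arrangement of d+1 hyperplanes in general position in ℝ^d, let p be a point in Δ(H), and let y_1, ..., y_{d+1} be points in ℝ^d such that y_i ∈ C_i(H) for every i ∈ [d+1]. Then p belongs to conv{y_1, ..., y_{d+1}}. -/
open scoped RealInnerProductSpace

/-- **Points in the corner regions span the central simplex.** If `H` is an arrangement
of `d + 1` hyperplanes in general position in `ℝ^d`, `p ∈ Δ(H)`, and `y i ∈ C i(H)` for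
every `i`, then `p ∈ conv {y 0, …, y d}`. -/
theorem corner_points_cover_simplex {d : ℕ}
    (u : Fin (d + 1) → EuclideanSpace ℝ (Fin d)) (c : Fin (d + 1) → ℝ)
    (hu : ∀ i, u i ≠ 0)
    (hindep : ∀ i : Fin (d + 1),
      LinearIndependent ℝ (fun j : {j : Fin (d + 1) // j ≠ i} => u j))
    (hempty : (⋂ i, {x : EuclideanSpace ℝ (Fin d) | ⟪x, u i⟫ = c i}) = ∅)
    (h : Fin (d + 1) → EuclideanSpace ℝ (Fin d))
    (hh : ∀ i j, j ≠ i → ⟪h i, u j⟫ = c j)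
    (p : EuclideanSpace ℝ (Fin d)) (hp : p ∈ convexHull ℝ (Set.range h))
    (y : Fin (d + 1) → EuclideanSpace ℝ (Fin d))
    (hy : ∀ i, y i ∈ cornerRegion u c h i) :
    p ∈ convexHull ℝ (Set.range y) := by
  classical
  set a : Fin (d + 1) → ℝ := fun j => ⟪h j, u j⟫ - c j with ha
  have ha0 : ∀ j, a j ≠ 0 := by
    intro j hj0
    have hmem : h j ∈ ⋂ i, {x : EuclideanSpace ℝ (Fin d) | ⟪x, u i⟫ = c i} := by
      refine Set.mem_iInter.2 fun i => ?_
      by_cases hij : i = j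
      · subst hij
        have : ⟪h i, u i⟫ - c i = 0 := hj0
        simpa [Set.mem_setOf_eq, sub_eq_zero] using this
      · exact hh j i hij
    rw [hempty] at hmem
    exact hmem
  have hval : ∀ (j k : Fin (d + 1)), ⟪h k, u j⟫ = c j + (if k = j then a j else 0) := by
    intro j k
    by_cases hk : k = j
    · subst hk; simp [ha]
    · simp [hk, hh k j (fun hjk => hk hjk.symm)]
  -- affine independence of the vertices
  have hAI : AffineIndependent ℝ h := by
    rw [affineIndependent_iff]
    intro s w hw hsum e he
    have h1 : ∑ k ∈ s, w k * ⟪h k, u e⟫ = 0 := by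
      have h0 : (⟪∑ k ∈ s, w k • h k, u e⟫ : ℝ) = 0 := by rw [hsum]; exact inner_zero_left _
      rw [sum_inner] at h0
      simpa only [real_inner_smul_left] using h0
    have h2 : ∑ k ∈ s, w k * ⟪h k, u e⟫ = w e * a e := by
      calc ∑ k ∈ s, w k * ⟪h k, u e⟫
          = ∑ k ∈ s, (w k * c e + (if k = e then w e * a e else 0)) := by
            refine Finset.sum_congr rfl fun k _ => ?_
            rw [hval e k]
            by_cases hk : k = e <;> simp [hk, mul_add]
        _ = (∑ k ∈ s, w k) * c e + ∑ k ∈ s, (if k = e then w e * a e else 0) := by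
            rw [Finset.sum_add_distrib, Finset.sum_mul]
        _ = w e * a e := by rw [hw, Finset.sum_ite_eq' s e (fun _ => w e * a e)]; simp [he]
    have : w e * a e = 0 := by rw [← h2, h1]
    exact (mul_eq_zero.1 this).resolve_right (ha0 e)
  have htot : affineSpan ℝ (Set.range h) = ⊤ := by
    rw [hAI.affineSpan_eq_top_iff_card_eq_finrank_add_one]
    simp [finrank_euclideanSpace]
  let b : AffineBasis (Fin (d + 1)) ℝ (EuclideanSpace ℝ (Fin d)) := ⟨h, hAI, htot⟩
  have hb : ⇑b = h := rfl
  -- barycentric coordinates vs. the hyperplane functionals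
  have hcoord : ∀ (x : EuclideanSpace ℝ (Fin d)) (j : Fin (d + 1)),
      ⟪x, u j⟫ - c j = b.coord j x * a j := by
    intro x j
    conv_lhs => rw [← b.linear_combination_coord_eq_self x]
    rw [hb, sum_inner]
    have : ∀ k, (⟪b.coord k x • h k, u j⟫ : ℝ)
        = b.coord k x * c j + (if k = j then b.coord j x * a j else 0) := by
      intro k
      rw [real_inner_smul_left, hval j k]
      by_cases hk : k = j <;> simp [hk, mul_add]
    rw [Finset.sum_congr rfl fun k _ => this k, Finset.sum_add_distrib, ← Finset.sum_mul,
      b.sum_coord_apply_eq_one, Finset.sum_ite_eq' Finset.univ j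
        (fun _ => b.coord j x * a j)]
    simp
  -- coordinates of p are nonnegative
  have hpc : ∀ j, 0 ≤ b.coord j p := by
    have := b.convexHull_eq_nonneg_coord
    rw [hb] at this
    rw [this] at hp
    exact hp
  -- coordinates of y i are nonpositive off the diagonal
  have hyc : ∀ i j, j ≠ i → b.coord j (y i) ≤ 0 := by
    intro i j hij
    have hmem : y i ∈ halfspacePlus u c h j := by
      have := hy i
      rw [cornerRegion, Set.mem_iInter] at this
      exact Set.mem_iInter.1 (this j) hij
    have hineq : (⟪y i, u j⟫ - c j) * a j ≤ 0 := hmem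
    rw [hcoord (y i) j] at hineq
    have hsq : 0 < a j * a j := mul_self_pos.2 (ha0 j)
    nlinarith [hineq, hsq]
  -- separation argument
  by_contra hcon
  obtain ⟨f, s, hfp, hfy⟩ := geometric_hahn_banach_point_closed
    (convex_convexHull ℝ (Set.range y)) ((Set.finite_range y).isClosed_convexHull (𝕜 := ℝ)) hcon
  -- expansion of f along the barycentric coordinates
  have hexp : ∀ x : EuclideanSpace ℝ (Fin d), f x = ∑ k, b.coord k x * f (h k) := by
    intro x
    conv_lhs => rw [← b.linear_combination_coord_eq_self x]
    rw [hb, map_sum]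
    simp [ContinuousLinearMap.map_smul, smul_eq_mul]
  -- vertex minimizing f
  obtain ⟨j₀, -, hj₀⟩ := Finset.exists_min_image Finset.univ (fun j => f (h j))
    ⟨0, Finset.mem_univ 0⟩
  have hj₀' : ∀ j, f (h j₀) ≤ f (h j) := fun j => hj₀ j (Finset.mem_univ j)
  have hshift : ∀ x : EuclideanSpace ℝ (Fin d),
      f x = f (h j₀) + ∑ k, b.coord k x * (f (h k) - f (h j₀)) := by
    intro x
    rw [hexp x]
    have : ∑ k, b.coord k x * (f (h k) - f (h j₀))
        = ∑ k, b.coord k x * f (h k) - (∑ k, b.coord k x) * f (h j₀) := by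
      rw [Finset.sum_mul, ← Finset.sum_sub_distrib]
      exact Finset.sum_congr rfl fun k _ => by ring
    rw [this, b.sum_coord_apply_eq_one]
    ring
  -- f p ≥ f (h j₀)
  have hple : f (h j₀) ≤ f p := by
    rw [hshift p]
    have : 0 ≤ ∑ k, b.coord k p * (f (h k) - f (h j₀)) :=
      Finset.sum_nonneg fun k _ => mul_nonneg (hpc k) (sub_nonneg.2 (hj₀' k))
    linarith
  -- f (y j₀) ≤ f (h j₀)
  have hyle : f (y j₀) ≤ f (h j₀) := by
    rw [hshift (y j₀)]
    have : ∑ k, b.coord k (y j₀) * (f (h k) - f (h j₀)) ≤ 0 := by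
      refine Finset.sum_nonpos fun k _ => ?_
      by_cases hk : k = j₀
      · subst hk; simp
      · exact mul_nonpos_of_nonpos_of_nonneg (hyc j₀ k hk) (sub_nonneg.2 (hj₀' k))
    linarith
  have : s < f (y j₀) := hfy (y j₀) (subset_convexHull ℝ _ (Set.mem_range_self j₀))
  linarith
end

section
/- For every positive integer k, every β > 0 and every ε with 0 < ε < 1/2, there exists n_0 such that for every n ≥ n_0 the following holds: if X_1, ..., X_k are pairwise disjoint n-element sets and E ⊆ X_1 × ... × X_k is a set of edges with |E| ≥ β·n^k, then there exist subsets S_i ⊆ X_i of equal size s = |S_1| = ... = |S_k| with s ≥ β^{1/ε^k}·n such that (1) |E ∩ (S_1 × ... × S_k)| ≥ β·s^k, and (2) for all subsets Y_i ⊆ S_i with |Y_i| ≥ ε·s for every i ∈ [k], the set E ∩ (Y_1 × ... × Y_k) is nonempty. -/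
open scoped Classical
open Real Finset


lemma aux_neg_log_le {x : ℝ} (hx : 0 < x) : -Real.log x ≤ 1 / (Real.exp 1 * x) := by
  have h1 : 0 < Real.exp 1 * x := by positivity
  have h2 : Real.log (1 / (Real.exp 1 * x)) ≤ 1 / (Real.exp 1 * x) - 1 :=
    Real.log_le_sub_one_of_pos (by positivity)
  rw [Real.log_div one_ne_zero (ne_of_gt h1), Real.log_one, Real.log_mul (Real.exp_ne_zero 1) (ne_of_gt hx), Real.log_exp] at h2
  linarith

lemma aux_xlog {x : ℝ} (hx : 0 < x) : x * (-Real.log x) ≤ 1 / Real.exp 1 := by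
  have := aux_neg_log_le hx
  have h1 : 0 < Real.exp 1 * x := by positivity
  have : x * (-Real.log x) ≤ x * (1 / (Real.exp 1 * x)) := by
    apply mul_le_mul_of_nonneg_left this hx.le
  calc x * (-Real.log x) ≤ x * (1 / (Real.exp 1 * x)) := this
    _ = 1 / Real.exp 1 := by field_simp
 
lemma aux_entropy {q : ℝ} (hq0 : 0 < q) (hq1 : q < 1) :
    q * (-Real.log q) + (1 - q) * (-Real.log (1 - q)) ≤ 1 := by
  have h1 := aux_xlog hq0
  have h2 := aux_xlog (x := 1 - q) (by linarith)
  have he : 2 ≤ Real.exp 1 := by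
    have := Real.exp_one_gt_d9
    norm_num at this ⊢; linarith
  have hepos : (0:ℝ) < Real.exp 1 := Real.exp_pos 1
  have : 1 / Real.exp 1 ≤ 1/2 := by
    rw [div_le_div_iff₀ hepos (by norm_num)]; linarith
  linarith

lemma aux_exp_le {x : ℝ} (hx : 0 ≤ x) : Real.exp x ≤ 1 + x * Real.exp x := by
  rcases le_or_gt (1 - x) 0 with h | h
  · nlinarith [Real.exp_pos x]
  · have h1 : 1 - x ≤ Real.exp (-x) := by have := Real.add_one_le_exp (-x); linarith
    have := mul_le_mul_of_nonneg_left h1 (Real.exp_pos x).le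
    rw [← Real.exp_add] at this
    simp at this
    nlinarith

lemma keyA (k : ℕ) (q lam : ℝ) (hq0 : 0 < q) (hq : q ≤ 1/2) (hl0 : 0 ≤ lam)
    (hl : lam ≤ q ^ k) :
    q ^ (1 - lam) + (1 - q) ^ (1 - lam) ≤ 1 + q ^ ((k:ℝ) - lam) := by
  have hq1 : q < 1 := by linarith
  have h1q : 0 < 1 - q := by linarith
  set L : ℝ := -Real.log q with hL
  set M : ℝ := -Real.log (1 - q) with hM
  have hL0 : 0 ≤ L := by
    have := Real.log_nonpos hq0.le hq1.le; simp [hL]; linarith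
  have hM0 : 0 ≤ M := by
    have := Real.log_nonpos h1q.le (by linarith); simp [hM]; linarith
  have hML : M ≤ L := by
    have := Real.log_le_log hq0 (by linarith : q ≤ 1 - q)
    simp [hL, hM]; linarith
  -- rewrite rpow as exp
  have e1 : q ^ (1 - lam) = q * Real.exp (lam * L) := by
    rw [Real.rpow_def_of_pos hq0]
    rw [show Real.log q * (1 - lam) = Real.log q + lam * L by simp [hL]; ring]
    rw [Real.exp_add, Real.exp_log hq0]
  have e2 : (1 - q) ^ (1 - lam) = (1 - q) * Real.exp (lam * M) := by
    rw [Real.rpow_def_of_pos h1q]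
    rw [show Real.log (1-q) * (1 - lam) = Real.log (1-q) + lam * M by simp [hM]; ring]
    rw [Real.exp_add, Real.exp_log h1q]
  have e3 : q ^ ((k:ℝ) - lam) = q ^ k * Real.exp (lam * L) := by
    rw [Real.rpow_def_of_pos hq0]
    rw [show Real.log q * ((k:ℝ) - lam) = Real.log q * k + lam * L by simp [hL]; ring]
    rw [Real.exp_add]
    congr 1
    rw [← Real.rpow_natCast q k, Real.rpow_def_of_pos hq0, mul_comm]
  rw [e1, e2, e3]
  have hexpL : 0 < Real.exp (lam * L) := Real.exp_pos _
  have b1 : Real.exp (lam * L) ≤ 1 + (lam * L) * Real.exp (lam * L) :=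
    aux_exp_le (by positivity)
  have b2 : Real.exp (lam * M) ≤ 1 + (lam * M) * Real.exp (lam * M) :=
    aux_exp_le (by positivity)
  have b3 : Real.exp (lam * M) ≤ Real.exp (lam * L) :=
    Real.exp_le_exp.2 (by nlinarith)
  have b2' : Real.exp (lam * M) ≤ 1 + (lam * M) * Real.exp (lam * L) := by
    have := mul_le_mul_of_nonneg_left b3 (mul_nonneg hl0 hM0)
    linarith
  have hent : q * L + (1 - q) * M ≤ 1 := aux_entropy hq0 hq1
  have hlam : lam * Real.exp (lam * L) ≤ q ^ k * Real.exp (lam * L) :=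
    mul_le_mul_of_nonneg_right hl hexpL.le
  nlinarith [mul_le_mul_of_nonneg_left b1 hq0.le, mul_le_mul_of_nonneg_left b2' h1q.le,
    mul_le_mul_of_nonneg_right hent (mul_nonneg hl0 hexpL.le)]

lemma keyB (k : ℕ) (hk : 1 ≤ k) (q lam : ℝ) (hq0 : 0 < q) (hq : q ≤ 1/2) (hl0 : 0 ≤ lam)
    (hl : lam ≤ q ^ k) :
    ∑ j ∈ Finset.range k, (if j = 0 then ((1-q) ^ (1-lam) : ℝ)
      else q ^ ((j:ℝ) - lam) * (1-q)) ≤ 1 := by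
  obtain ⟨k', rfl⟩ : ∃ k', k = k' + 1 := ⟨k - 1, by omega⟩
  have h1q : (0:ℝ) < 1 - q := by linarith
  have hq1' : q ≠ 1 := by intro h; rw [h] at hq; norm_num at hq
  rw [Finset.sum_range_succ']
  simp only [Nat.succ_ne_zero, if_false, if_true, reduceIte]
  have e1 : q ^ ((1:ℝ) - lam) = q * q ^ (-lam) := by
    rw [show (1:ℝ) - lam = 1 + (-lam) by ring, Real.rpow_add hq0, Real.rpow_one]
  have e2 : q ^ (((k'+1:ℕ):ℝ) - lam) = q ^ (k'+1) * q ^ (-lam) := by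
    rw [show ((k'+1:ℕ):ℝ) - lam = ((k'+1:ℕ):ℝ) + (-lam) by ring, Real.rpow_add hq0,
      Real.rpow_natCast]
  have hsum : ∑ j ∈ Finset.range k', q ^ (((j+1:ℕ):ℝ) - lam) * (1-q)
      = q ^ ((1:ℝ) - lam) - q ^ (((k'+1:ℕ):ℝ) - lam) := by
    have hc : ∀ j ∈ Finset.range k', q ^ (((j+1:ℕ):ℝ) - lam) * (1-q)
        = (q ^ (-lam) * (1-q) * q) * q ^ j := by
      intro j _
      rw [show ((j+1:ℕ):ℝ) - lam = ((j+1:ℕ):ℝ) + (-lam) by ring, Real.rpow_add hq0,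
        Real.rpow_natCast, pow_succ]
      ring
    rw [Finset.sum_congr rfl hc, ← Finset.mul_sum]
    rw [geom_sum_eq hq1', e1, e2]
    field_simp [sub_ne_zero.2 hq1']
    ring
  rw [hsum]
  have := keyA (k'+1) q lam hq0 hq hl0 hl
  push_cast at this ⊢
  linarith

lemma keyC (k s y : ℕ) (hk : 1 ≤ k) (hy : 1 ≤ y) (h2y : 2*y ≤ s) (lam : ℝ)
    (hl0 : 0 ≤ lam) (hl : lam ≤ ((y:ℝ)/(s:ℝ))^k) :
    ∑ j ∈ Finset.range k, ((y:ℝ)^j * ((s:ℝ)-(y:ℝ)) * (s:ℝ)^(k-1-j) *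
      ((if j = 0 then ((s:ℝ)-(y:ℝ)) else (y:ℝ)) ^ (-lam)))
      ≤ (s:ℝ)^k * (s:ℝ)^(-lam) := by
  have hs0 : (0:ℝ) < s := by
    have h2 : 2 ≤ s := le_trans (by omega) h2y
    exact_mod_cast by omega
  have hy0 : (0:ℝ) < y := by exact_mod_cast hy
  have hsy : (y:ℝ) ≤ (s:ℝ) - (y:ℝ) := by
    have h := (Nat.cast_le (α := ℝ)).2 h2y
    push_cast at h; linarith
  have hsy0 : (0:ℝ) < (s:ℝ) - (y:ℝ) := lt_of_lt_of_le hy0 hsy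
  set q : ℝ := (y:ℝ)/(s:ℝ) with hqdef
  have hq0 : 0 < q := by positivity
  have hq12 : q ≤ 1/2 := by
    rw [hqdef, div_le_div_iff₀ hs0 (by norm_num : (0:ℝ)<2)]
    push_cast; linarith
  have h1q : (0:ℝ) < 1 - q := by linarith
  have hys : (y:ℝ) = q * s := by rw [hqdef]; field_simp
  have h1qs : (s:ℝ) - (y:ℝ) = (1 - q) * s := by rw [hqdef]; field_simp
  have hterm : ∀ j ∈ Finset.range k,
      (y:ℝ)^j * ((s:ℝ)-(y:ℝ)) * (s:ℝ)^(k-1-j) *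
        ((if j = 0 then ((s:ℝ)-(y:ℝ)) else (y:ℝ)) ^ (-lam))
      = ((s:ℝ)^k * (s:ℝ)^(-lam)) *
        (if j = 0 then ((1-q) ^ (1-lam) : ℝ) else q ^ ((j:ℝ) - lam) * (1-q)) := by
    intro j hj
    have hjk : j < k := Finset.mem_range.1 hj
    have hpow : (s:ℝ)^j * (s:ℝ)^(k-1-j) = (s:ℝ)^(k-1) := by
      rw [← pow_add]; congr 1; omega
    have hsk : (s:ℝ)^(k-1) * s = (s:ℝ)^k := by rw [← pow_succ]; congr 1; omega
    by_cases h0 : j = 0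
    · subst h0
      simp only [if_true, pow_zero, one_mul, reduceIte]
      rw [h1qs, Real.mul_rpow h1q.le hs0.le]
      have e1 : ((1:ℝ)-q) ^ ((1:ℝ)-lam) = (1-q) * (1-q) ^ (-lam) := by
        rw [show (1:ℝ) - lam = 1 + (-lam) by ring, Real.rpow_add h1q, Real.rpow_one]
      rw [e1]
      have e2 : (s:ℝ)^(k-1-0) = (s:ℝ)^(k-1) := by norm_num
      rw [e2, ← hsk]
      ring
    · simp only [h0, if_false, reduceIte]
      rw [h1qs, hys, Real.mul_rpow hq0.le hs0.le, mul_pow]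
      have e1 : q ^ ((j:ℝ) - lam) = q ^ j * q ^ (-lam) := by
        rw [show ((j:ℕ):ℝ) - lam = ((j:ℕ):ℝ) + (-lam) by ring, Real.rpow_add hq0,
          Real.rpow_natCast]
      rw [e1, ← hsk, ← hpow]
      ring
  rw [Finset.sum_congr rfl hterm, ← Finset.mul_sum]
  have hB := keyB k hk q lam hq0 hq12 hl0 (by rw [hqdef]; exact hl)
  have hpos : (0:ℝ) ≤ (s:ℝ)^k * (s:ℝ)^(-lam) := by positivity
  nlinarith [mul_le_mul_of_nonneg_left hB hpos]


noncomputable def cnt {V : Type} {k : ℕ} (E : Finset (Fin k → V)) (T : Fin k → Finset V) : ℕ :=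
  (E.filter (fun e => ∀ i, e i ∈ T i)).card

lemma cnt_erase_sum {V : Type} {k : ℕ} (E : Finset (Fin k → V)) (T : Fin k → Finset V)
    (i₀ : Fin k) :
    ∑ x ∈ T i₀, cnt E (Function.update T i₀ ((T i₀).erase x))
      = ((T i₀).card - 1) * cnt E T := by
  unfold cnt
  simp only [Finset.card_filter]
  rw [Finset.sum_comm]
  have hinner : ∀ e ∈ E,
      (∑ x ∈ T i₀, if (∀ i, e i ∈ Function.update T i₀ ((T i₀).erase x) i) then (1:ℕ) else 0)
      = (if (∀ i, e i ∈ T i) then (1:ℕ) else 0) * ((T i₀).card - 1) := by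
    intro e _
    by_cases h : ∀ i, e i ∈ T i
    · rw [if_pos h, one_mul]
      have hc : ∀ x ∈ T i₀,
          (if (∀ i, e i ∈ Function.update T i₀ ((T i₀).erase x) i) then (1:ℕ) else 0)
          = if x ≠ e i₀ then 1 else 0 := by
        intro x _
        congr 1
        apply propext
        constructor
        · intro hall
          have := hall i₀
          rw [Function.update_self] at this
          exact fun hx => (Finset.ne_of_mem_erase this) hx.symm
        · intro hx i
          by_cases hii : i = i₀
          · rw [hii, Function.update_self]
            exact Finset.mem_erase.2 ⟨fun hh => hx hh.symm, h i₀⟩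
          · rw [Function.update_of_ne hii]; exact h i
      rw [Finset.sum_congr rfl hc]
      have : ∀ x ∈ T i₀, (if x ≠ e i₀ then (1:ℕ) else 0) = if x ∈ (T i₀).erase (e i₀) then 1 else 0 := by
        intro x hx
        by_cases hxe : x = e i₀
        · simp [hxe]
        · simp [hxe, Finset.mem_erase, hx]
      rw [Finset.sum_congr rfl this, Finset.sum_ite_mem, Finset.inter_comm,
        Finset.inter_eq_left.2 (Finset.erase_subset _ _)]
      simp [Finset.card_erase_of_mem (h i₀)]
    · rw [if_neg h, zero_mul]
      apply Finset.sum_eq_zero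
      intro x _
      rw [if_neg]
      intro hall
      apply h
      intro i
      have := hall i
      by_cases hii : i = i₀
      · rw [hii] at this ⊢
        rw [Function.update_self] at this
        exact Finset.mem_of_mem_erase this
      · rwa [Function.update_of_ne hii] at this
  rw [Finset.sum_congr rfl hinner, ← Finset.sum_mul, mul_comm]

lemma shrink_aux {V : Type} {k : ℕ} (E : Finset (Fin k → V)) (m : ℕ) (hm1 : 1 ≤ m)
    (N : ℕ) :
    ∀ T : Fin k → Finset V, (∑ i, (T i).card) = N → (∀ i, m ≤ (T i).card) →
    ∃ U : Fin k → Finset V, (∀ i, U i ⊆ T i) ∧ (∀ i, (U i).card = m) ∧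
      (cnt E T : ℝ) * ∏ i, ((m:ℝ)/((T i).card : ℝ)) ≤ (cnt E U : ℝ) := by
  induction N using Nat.strong_induction_on with
  | _ N ih =>
    intro T hTN hm
    by_cases hall : ∀ i, (T i).card = m
    · refine ⟨T, fun i => Finset.Subset.refl _, hall, ?_⟩
      have : ∀ i ∈ Finset.univ (α := Fin k), ((m:ℝ)/((T i).card : ℝ)) = 1 := by
        intro i _
        have hm0 : (0:ℝ) < m := by exact_mod_cast hm1
        rw [hall i]
        field_simp
      rw [Finset.prod_congr rfl this, Finset.prod_const_one, mul_one]
    · push_neg at hall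
      obtain ⟨i₀, hne⟩ := hall
      have hlt : m < (T i₀).card := lt_of_le_of_ne (hm i₀) (Ne.symm hne)
      set t := (T i₀).card with ht
      have ht2 : 2 ≤ t := by omega
      have hTne : (T i₀).Nonempty := Finset.card_pos.1 (by omega)
      -- pigeonhole
      have hsum := cnt_erase_sum E T i₀
      have hex : ∃ x ∈ T i₀, (t-1) * cnt E T ≤ t * cnt E (Function.update T i₀ ((T i₀).erase x)) := by
        by_contra hcon
        push_neg at hcon
        have hlt2 : ∑ x ∈ T i₀, t * cnt E (Function.update T i₀ ((T i₀).erase x))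
            < ∑ x ∈ T i₀, (t-1) * cnt E T :=
          Finset.sum_lt_sum_of_nonempty hTne (fun x hx => hcon x hx)
        rw [← Finset.mul_sum, hsum, Finset.sum_const, smul_eq_mul] at hlt2
        rw [← ht] at hlt2
        omega
      obtain ⟨x, hxmem, hx⟩ := hex
      set T' := Function.update T i₀ ((T i₀).erase x) with hT'
      have hT'card : ∀ i, (T' i).card = if i = i₀ then t - 1 else (T i).card := by
        intro i
        rcases eq_or_ne i i₀ with rfl | hi
        · simp [hT', Function.update_self, Finset.card_erase_of_mem hxmem, ht]
        · simp [hT', Function.update_of_ne hi, hi]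
      have hT'sub : ∀ i, T' i ⊆ T i := by
        intro i
        rcases eq_or_ne i i₀ with rfl | hi
        · rw [hT', Function.update_self]; exact Finset.erase_subset _ _
        · rw [hT', Function.update_of_ne hi]
      have hm' : ∀ i, m ≤ (T' i).card := by
        intro i
        rw [hT'card i]
        by_cases hii : i = i₀
        · rw [if_pos hii]; omega
        · rw [if_neg hii]; exact hm i
      have hsum' : (∑ i, (T' i).card) = N - 1 := by
        have e1 : ∑ i, (T' i).card = ∑ i, (if i = i₀ then t - 1 else (T i).card) :=
          Finset.sum_congr rfl (fun i _ => hT'card i)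
        have e2 : ∑ i, (if i = i₀ then t - 1 else (T i).card)
            = (t-1) + ∑ i ∈ Finset.univ.erase i₀, (T i).card := by
          rw [← Finset.add_sum_erase _ _ (Finset.mem_univ i₀)]
          simp only [if_pos rfl]
          congr 1
          apply Finset.sum_congr rfl
          intro i hi
          rw [if_neg (Finset.ne_of_mem_erase hi)]
        have e3 : N = t + ∑ i ∈ Finset.univ.erase i₀, (T i).card := by
          rw [← hTN, ← Finset.add_sum_erase _ _ (Finset.mem_univ i₀)]
        rw [e1, e2]; omega
      have hNpos : 1 ≤ N := by
        rw [← hTN]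
        calc 1 ≤ t := by omega
        _ ≤ ∑ i, (T i).card := Finset.single_le_sum (f := fun i => (T i).card) (fun i _ => Nat.zero_le _) (Finset.mem_univ i₀)
      obtain ⟨U, hU1, hU2, hU3⟩ := ih (N-1) (by omega) T' hsum' hm'
      refine ⟨U, fun i => (hU1 i).trans (hT'sub i), hU2, ?_⟩
      refine le_trans ?_ hU3
      -- cnt T * ∏ (m/card T) ≤ cnt T' * ∏ (m/card T')
      have hP : ∀ i ∈ Finset.univ.erase i₀, ((m:ℝ)/((T' i).card : ℝ)) = ((m:ℝ)/((T i).card : ℝ)) := by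
        intro i hi
        rw [hT'card, if_neg (Finset.ne_of_mem_erase hi)]
      rw [← Finset.mul_prod_erase _ _ (Finset.mem_univ i₀), ← Finset.mul_prod_erase _ (fun i => (m:ℝ)/((T' i).card:ℝ)) (Finset.mem_univ i₀)]
      rw [Finset.prod_congr rfl hP]
      set P : ℝ := ∏ i ∈ Finset.univ.erase i₀, ((m:ℝ)/((T i).card : ℝ)) with hPdef
      have hPnn : 0 ≤ P := by
        apply Finset.prod_nonneg
        intro i _
        positivity
      have hc1 : (T' i₀).card = t - 1 := by rw [hT'card, if_pos rfl]
      have ht1R : ((t-1:ℕ):ℝ) = (t:ℝ) - 1 := by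
        rw [Nat.cast_sub (by omega)]; norm_num
      rw [hc1, ht1R]
      have htpos : (0:ℝ) < t := by positivity
      have ht1pos : (0:ℝ) < (t:ℝ) - 1 := by
        have : (2:ℝ) ≤ t := by exact_mod_cast ht2
        linarith
      have hxR : ((t:ℝ)-1) * (cnt E T : ℝ) ≤ (t:ℝ) * (cnt E T' : ℝ) := by
        rw [← ht1R]
        exact_mod_cast hx
      have hkey : (cnt E T : ℝ) * ((m:ℝ)/(t:ℝ)) ≤ (cnt E T' : ℝ) * ((m:ℝ)/((t:ℝ)-1)) := by
        rw [div_eq_mul_inv, div_eq_mul_inv]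
        have hmnn : (0:ℝ) ≤ m := by positivity
        rw [mul_comm ((t:ℝ)-1) _] at hxR
        have h2 := mul_le_mul_of_nonneg_right hxR (le_of_lt (by positivity : (0:ℝ) < ((t:ℝ))⁻¹ * ((t:ℝ)-1)⁻¹ * m))
        calc (cnt E T : ℝ) * ((m:ℝ) * (t:ℝ)⁻¹)
            = (cnt E T : ℝ) * ((t:ℝ)-1) * ((t:ℝ)⁻¹ * ((t:ℝ)-1)⁻¹ * m) := by
              field_simp
          _ ≤ (t:ℝ) * (cnt E T' : ℝ) * ((t:ℝ)⁻¹ * ((t:ℝ)-1)⁻¹ * m) := h2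
          _ = (cnt E T' : ℝ) * ((m:ℝ) * ((t:ℝ)-1)⁻¹) := by
              field_simp
      calc (cnt E T : ℝ) * ((m:ℝ)/(t:ℝ) * P)
          = ((cnt E T : ℝ) * ((m:ℝ)/(t:ℝ))) * P := by ring
        _ ≤ ((cnt E T' : ℝ) * ((m:ℝ)/((t:ℝ)-1))) * P := mul_le_mul_of_nonneg_right hkey hPnn
        _ = (cnt E T' : ℝ) * ((m:ℝ)/((t:ℝ)-1) * P) := by ring

lemma shrink {V : Type} {k : ℕ} (E : Finset (Fin k → V)) (T : Fin k → Finset V) (m : ℕ)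
    (hm1 : 1 ≤ m) (hm : ∀ i, m ≤ (T i).card) :
    ∃ U : Fin k → Finset V, (∀ i, U i ⊆ T i) ∧ (∀ i, (U i).card = m) ∧
      (cnt E T : ℝ) * ∏ i, ((m:ℝ)/((T i).card : ℝ)) ≤ (cnt E U : ℝ) :=
  shrink_aux E m hm1 _ T rfl hm

lemma box_partition {V : Type} {k : ℕ} (hk : 0 < k) (E : Finset (Fin k → V))
    (S Y' : Fin k → Finset V) (hY'S : ∀ i, Y' i ⊆ S i)
    (hno : ∀ e ∈ E, ¬ (∀ i, e i ∈ Y' i)) :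
    cnt E S = ∑ j : Fin k,
      cnt E (fun i => if i < j then Y' i else if i = j then S i \ Y' i else S i) := by
  set f : (Fin k → V) → Fin k := fun e =>
    if h : (Finset.univ.filter (fun j => e j ∉ Y' j)).Nonempty
    then (Finset.univ.filter (fun j => e j ∉ Y' j)).min' h else ⟨0, hk⟩ with hf
  unfold cnt
  rw [Finset.card_eq_sum_card_fiberwise (f := f) (t := Finset.univ) (fun e _ => Finset.mem_univ _)]
  apply Finset.sum_congr rfl
  intro j _
  congr 1
  ext e
  simp only [Finset.mem_filter]
  constructor
  · rintro ⟨⟨heE, hS⟩, hfe⟩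
    have hne : (Finset.univ.filter (fun j => e j ∉ Y' j)).Nonempty := by
      have := hno e heE
      push_neg at this
      obtain ⟨i, hi⟩ := this
      exact ⟨i, Finset.mem_filter.2 ⟨Finset.mem_univ _, hi⟩⟩
    rw [hf] at hfe
    simp only [dif_pos hne] at hfe
    have hjmem : j ∈ Finset.univ.filter (fun j => e j ∉ Y' j) := hfe ▸ Finset.min'_mem _ hne
    have hjY : e j ∉ Y' j := (Finset.mem_filter.1 hjmem).2
    have hlt : ∀ i, i < j → e i ∈ Y' i := by
      intro i hij
      by_contra hiY
      have : j ≤ i := hfe ▸ Finset.min'_le _ i (Finset.mem_filter.2 ⟨Finset.mem_univ _, hiY⟩)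
      exact absurd hij (not_lt.2 this)
    refine ⟨heE, fun i => ?_⟩
    rcases lt_trichotomy i j with h | h | h
    · rw [if_pos h]; exact hlt i h
    · rw [if_neg (by simp [h]), if_pos h]
      exact Finset.mem_sdiff.2 ⟨h ▸ hS i, h ▸ hjY⟩
    · rw [if_neg (not_lt.2 h.le), if_neg (ne_of_gt h)]
      exact hS i
  · rintro ⟨heE, hB⟩
    have hS : ∀ i, e i ∈ S i := by
      intro i
      have := hB i
      rcases lt_trichotomy i j with h | h | h
      · rw [if_pos h] at this; exact hY'S i this
      · rw [if_neg (by simp [h]), if_pos h] at this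
        exact (Finset.mem_sdiff.1 this).1
      · rwa [if_neg (not_lt.2 h.le), if_neg (ne_of_gt h)] at this
    have hjY : e j ∉ Y' j := by
      have := hB j
      rw [if_neg (lt_irrefl j), if_pos rfl] at this
      exact (Finset.mem_sdiff.1 this).2
    have hne : (Finset.univ.filter (fun j => e j ∉ Y' j)).Nonempty :=
      ⟨j, Finset.mem_filter.2 ⟨Finset.mem_univ _, hjY⟩⟩
    refine ⟨⟨heE, hS⟩, ?_⟩
    rw [hf]
    simp only [dif_pos hne]
    have h1 : (Finset.univ.filter (fun j => e j ∉ Y' j)).min' hne ≤ j :=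
      Finset.min'_le _ j (Finset.mem_filter.2 ⟨Finset.mem_univ _, hjY⟩)
    rcases lt_or_eq_of_le h1 with h | h
    · exfalso
      have hmem := Finset.min'_mem _ hne
      have := hB ((Finset.univ.filter (fun j => e j ∉ Y' j)).min' hne)
      rw [if_pos h] at this
      exact (Finset.mem_filter.1 hmem).2 this
    · exact h

lemma box_prod_card {V : Type} {k : ℕ} (S Y' : Fin k → Finset V) (s y : ℕ)
    (hS : ∀ i, (S i).card = s) (hY' : ∀ i, (Y' i).card = y) (hY'S : ∀ i, Y' i ⊆ S i)
    (j : Fin k) :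
    ∏ i, ((fun i => if i < j then Y' i else if i = j then S i \ Y' i else S i) i).card
      = y ^ (j:ℕ) * (s - y) * s ^ (k - 1 - (j:ℕ)) := by
  have hcard : ∀ i : Fin k,
      ((if i < j then Y' i else if i = j then S i \ Y' i else S i)).card
      = if i < j then y else if i = j then s - y else s := by
    intro i
    rcases lt_trichotomy i j with h | h | h
    · rw [if_pos h, if_pos h]; exact hY' i
    · have hnlt : ¬ i < j := by rw [h]; exact lt_irrefl j
      rw [if_neg hnlt, if_neg hnlt, if_pos h, if_pos h]
      rw [Finset.card_sdiff_of_subset (hY'S i), hS i, hY' i]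
    · rw [if_neg (not_lt.2 h.le), if_neg (not_lt.2 h.le), if_neg (ne_of_gt h), if_neg (ne_of_gt h)]
      exact hS i
  simp only [hcard]
  rw [← Finset.prod_filter_mul_prod_filter_not Finset.univ (fun i => i < j)]
  have e1 : Finset.univ.filter (fun i => i < j) = Finset.Iio j := by ext i; simp
  have e2 : Finset.univ.filter (fun i => ¬ i < j) = Finset.Ici j := by ext i; simp [not_lt]
  rw [e1, e2]
  have p1 : ∏ i ∈ Finset.Iio j, (if i < j then y else if i = j then s - y else s) = y ^ (j:ℕ) := by
    rw [Finset.prod_congr rfl (fun i hi => by rw [if_pos (Finset.mem_Iio.1 hi)])]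
    rw [Finset.prod_const, Fin.card_Iio]
  have p2 : ∏ i ∈ Finset.Ici j, (if i < j then y else if i = j then s - y else s)
      = (s - y) * s ^ (k - 1 - (j:ℕ)) := by
    rw [← Finset.Ioi_insert, Finset.prod_insert (Finset.notMem_Ioi_self)]
    congr 1
    · rw [if_neg (lt_irrefl j), if_pos rfl]
    · rw [Finset.prod_congr rfl (fun i hi => by
        have h := Finset.mem_Ioi.1 hi
        rw [if_neg (not_lt.2 h.le), if_neg (ne_of_gt h)])]
      rw [Finset.prod_const, Fin.card_Ioi]
  rw [p1, p2, mul_assoc]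
/-- **Weak regularity lemma for hypergraphs.** For every `k ≥ 1`, `β > 0` and
`0 < ε < 1/2` there is `n₀` such that for every `n ≥ n₀`, every `k`-partite `k`-uniform
hypergraph `E ⊆ X 0 × ⋯ × X (k-1)` on pairwise disjoint `n`-element vertex classes with
at least `β n^k` edges admits subsets `S i ⊆ X i` of equal size `s ≥ β^(1/ε^k) n`
such that the density on `S 0, …, S (k-1)` is at least `β` and every choice of subsets
`Y i ⊆ S i` with `|Y i| ≥ ε s` induces an edge. -/
theorem weak_hypergraph_regularity (k : ℕ) (hk : 0 < k) (β ε : ℝ)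
    (hβ : 0 < β) (hε0 : 0 < ε) (hε : ε < 1 / 2) :
    ∃ n₀ : ℕ, ∀ n : ℕ, n₀ ≤ n →
      ∀ (V : Type) (X : Fin k → Finset V) (E : Finset (Fin k → V)),
        (∀ i j, i ≠ j → Disjoint (X i) (X j)) →
        (∀ i, (X i).card = n) →
        (∀ e ∈ E, ∀ i, e i ∈ X i) →
        β * (n : ℝ) ^ k ≤ (E.card : ℝ) →
        ∃ (S : Fin k → Finset V) (s : ℕ),
          (∀ i, S i ⊆ X i) ∧
          (∀ i, (S i).card = s) ∧
          β ^ (1 / ε ^ k) * (n : ℝ) ≤ (s : ℝ) ∧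
          β * (s : ℝ) ^ k ≤ ((E.filter (fun e => ∀ i, e i ∈ S i)).card : ℝ) ∧
          ∀ Y : Fin k → Finset V,
            (∀ i, Y i ⊆ S i) → (∀ i, ε * (s : ℝ) ≤ ((Y i).card : ℝ)) →
            ∃ e ∈ E, ∀ i, e i ∈ Y i := by
  set lam : ℝ := ε ^ k with hlamdef
  have hlam0 : 0 < lam := pow_pos hε0 k
  set c : ℝ := β ^ (1 / ε ^ k) with hcdef
  have hc0 : 0 < c := Real.rpow_pos_of_pos hβ _
  have h2ε : (0:ℝ) < 1 - 2*ε := by linarith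
  refine ⟨⌈(3/(1-2*ε)) / c⌉₊ + 1, ?_⟩
  intro n hn V X E hdisj hX hE hcard
  have hn1 : 1 ≤ n := le_trans (by omega) hn
  have hnR : ((3/(1-2*ε)) / c) < (n:ℝ) := by
    calc (3/(1-2*ε))/c ≤ (⌈(3/(1-2*ε))/c⌉₊ : ℝ) := Nat.le_ceil _
      _ < n := by exact_mod_cast (by omega : ⌈(3/(1-2*ε))/c⌉₊ < n)
  have hcn : 3/(1-2*ε) ≤ c * n := by
    rw [div_lt_iff₀ hc0] at hnR
    nlinarith
  set Good : ℕ → Prop := fun t => ∃ S : Fin k → Finset V,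
    (∀ i, S i ⊆ X i) ∧ (∀ i, (S i).card = t) ∧ 1 ≤ t ∧
    β * (n:ℝ) ^ lam * (t:ℝ)^k ≤ (cnt E S : ℝ) * (t:ℝ) ^ lam with hGooddef
  have hGn : Good n := by
    refine ⟨X, fun i => Finset.Subset.refl _, hX, hn1, ?_⟩
    have hcX : cnt E X = E.card := by
      unfold cnt; rw [Finset.filter_eq_self.2 hE]
    rw [hcX]
    have hnl : (0:ℝ) ≤ (n:ℝ)^lam := Real.rpow_nonneg (Nat.cast_nonneg n) lam
    have h1 := mul_le_mul_of_nonneg_right hcard hnl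
    calc β * (n:ℝ)^lam * (n:ℝ)^k = β * (n:ℝ)^k * (n:ℝ)^lam := by ring
      _ ≤ (E.card : ℝ) * (n:ℝ)^lam := h1
  set s : ℕ := sInf {t | Good t} with hsdef
  have hsG : Good s := by
    have h := Nat.sInf_mem (s := {t | Good t}) ⟨n, hGn⟩
    exact h
  obtain ⟨S, hSX, hScard, hs1, hQ⟩ := hsG
  have hs0R : (0:ℝ) < s := by exact_mod_cast hs1
  have hslam : (0:ℝ) < (s:ℝ)^lam := Real.rpow_pos_of_pos hs0R lam
  have hsn : s ≤ n := by
    have := Finset.card_le_card (hSX ⟨0, hk⟩)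
    rwa [hScard, hX] at this
  have hcnt_le : cnt E S ≤ s ^ k := by
    unfold cnt
    calc (E.filter (fun e => ∀ i, e i ∈ S i)).card
        ≤ (Fintype.piFinset S).card := by
          apply Finset.card_le_card
          intro e he
          rw [Fintype.mem_piFinset]
          exact (Finset.mem_filter.1 he).2
      _ = ∏ i, (S i).card := Fintype.card_piFinset S
      _ = s ^ k := by
          rw [Finset.prod_congr rfl (fun i _ => hScard i), Finset.prod_const,
            Finset.card_univ, Fintype.card_fin]
  have hbn : β * (n:ℝ)^lam ≤ (s:ℝ)^lam := by
    have h0 : (cnt E S : ℝ) ≤ (s:ℝ)^k := by exact_mod_cast hcnt_le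
    have h1 : β * (n:ℝ)^lam * (s:ℝ)^k ≤ (s:ℝ)^k * (s:ℝ)^lam :=
      le_trans hQ (mul_le_mul_of_nonneg_right h0 hslam.le)
    have hsk : (0:ℝ) < (s:ℝ)^k := by positivity
    nlinarith
  have hclam : c ^ lam = β := by
    rw [hcdef, ← Real.rpow_mul hβ.le]
    rw [show (1 / ε^k) * lam = 1 by field_simp; exact hlamdef]
    exact Real.rpow_one β
  have hsize : c * n ≤ (s:ℝ) := by
    by_contra hcon
    push_neg at hcon
    have h1 : (s:ℝ)^lam < ((c*(n:ℝ)))^lam := Real.rpow_lt_rpow (Nat.cast_nonneg s) hcon hlam0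
    have h2 : ((c*(n:ℝ)))^lam = β * (n:ℝ)^lam := by
      rw [Real.mul_rpow hc0.le (Nat.cast_nonneg n), hclam]
    rw [h2] at h1
    linarith
  have hns : (s:ℝ)^lam ≤ (n:ℝ)^lam :=
    Real.rpow_le_rpow (Nat.cast_nonneg s) (by exact_mod_cast hsn) hlam0.le
  have hdens : β * (s:ℝ)^k ≤ (cnt E S : ℝ) := by
    have hsk : (0:ℝ) ≤ (s:ℝ)^k := by positivity
    have h2 : β * (s:ℝ)^k * (s:ℝ)^lam ≤ (cnt E S:ℝ) * (s:ℝ)^lam := by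
      calc β * (s:ℝ)^k * (s:ℝ)^lam = (β * (s:ℝ)^k) * (s:ℝ)^lam := by ring
        _ ≤ (β * (s:ℝ)^k) * (n:ℝ)^lam := by
            apply mul_le_mul_of_nonneg_left hns (by positivity)
        _ = β * (n:ℝ)^lam * (s:ℝ)^k := by ring
        _ ≤ (cnt E S:ℝ) * (s:ℝ)^lam := hQ
    exact le_of_mul_le_mul_right h2 hslam
  refine ⟨S, s, hSX, hScard, hsize, hdens, ?_⟩
  -- property 2
  intro Y hYS hYc
  by_contra hno
  push_neg at hno
  have hs3 : (3:ℝ) ≤ (1-2*ε) * s := by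
    have h1 : 3/(1-2*ε) ≤ (s:ℝ) := le_trans hcn hsize
    rw [div_le_iff₀ h2ε] at h1
    nlinarith
  set y : ℕ := ⌈ε * (s:ℝ)⌉₊ with hydef
  have hεs0 : 0 < ε * (s:ℝ) := by positivity
  have hy1 : 1 ≤ y := Nat.ceil_pos.2 hεs0
  have hyR : ε * (s:ℝ) ≤ y := Nat.le_ceil _
  have hyR2 : (y:ℝ) < ε * s + 1 := Nat.ceil_lt_add_one hεs0.le
  have h2y : 2 * y ≤ s := by
    have h3 : 2*(y:ℝ) < (s:ℝ) - 1 := by nlinarith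
    have h4 : ((2*y:ℕ):ℝ) < (s:ℝ) := by push_cast; linarith
    have := (Nat.cast_lt (α := ℝ)).1 h4
    omega
  have hyY : ∀ i, y ≤ (Y i).card := fun i => Nat.ceil_le.2 (hYc i)
  choose Y' hY'sub hY'card using fun i => Finset.exists_subset_card_eq (hyY i)
  have hY'S : ∀ i, Y' i ⊆ S i := fun i => (hY'sub i).trans (hYS i)
  have hnoY' : ∀ e ∈ E, ¬ (∀ i, e i ∈ Y' i) := by
    intro e he hall
    obtain ⟨i, hi⟩ := hno e he
    exact hi (hY'sub i (hall i))
  set B : Fin k → (Fin k → Finset V) :=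
    fun j i => if i < j then Y' i else if i = j then S i \ Y' i else S i with hBdef
  have hpart := box_partition hk E S Y' hY'S hnoY'
  have hBcard : ∀ (j : Fin k) (i : Fin k),
      (B j i).card = if i < j then y else if i = j then s - y else s := by
    intro j i
    rcases lt_trichotomy i j with h | h | h
    · rw [hBdef]; dsimp only; rw [if_pos h, if_pos h]; exact hY'card i
    · have hnlt : ¬ i < j := by rw [h]; exact lt_irrefl j
      rw [hBdef]; dsimp only; rw [if_neg hnlt, if_neg hnlt, if_pos h, if_pos h]
      rw [Finset.card_sdiff_of_subset (hY'S i), hScard i, hY'card i]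
    · rw [hBdef]; dsimp only
      rw [if_neg (not_lt.2 h.le), if_neg (not_lt.2 h.le), if_neg (ne_of_gt h), if_neg (ne_of_gt h)]
      exact hScard i
  set m : Fin k → ℕ := fun j => if (j:ℕ) = 0 then s - y else y with hmdef
  have hy_lt_s : y < s := by omega
  have hm1 : ∀ j, 1 ≤ m j := by
    intro j; rw [hmdef]; dsimp only; split <;> omega
  have hmlt : ∀ j, m j < s := by
    intro j; rw [hmdef]; dsimp only; split <;> omega
  have hmB : ∀ j i, m j ≤ (B j i).card := by
    intro j i
    rw [hBcard j i, hmdef]; dsimp only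
    rcases lt_trichotomy i j with h | h | h
    · rw [if_pos h]
      have hj0 : (j:ℕ) ≠ 0 := by
        have : (i:ℕ) < (j:ℕ) := h
        omega
      rw [if_neg hj0]
    · have hnlt : ¬ i < j := by rw [h]; exact lt_irrefl j
      rw [if_neg hnlt, if_pos h]
      split <;> omega
    · rw [if_neg (not_lt.2 h.le), if_neg (ne_of_gt h)]
      split <;> omega
  -- the weighted pigeonhole
  have hql : lam ≤ ((y:ℝ)/(s:ℝ))^k := by
    have hqε : ε ≤ (y:ℝ)/(s:ℝ) := (le_div_iff₀ hs0R).2 hyR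
    rw [hlamdef]
    exact pow_le_pow_left₀ hε0.le hqε k
  have hC := keyC k s y hk hy1 h2y lam hlam0.le hql
  have hcastm : ∀ j : Fin k, (m j : ℝ) = if (j:ℕ) = 0 then (s:ℝ) - (y:ℝ) else (y:ℝ) := by
    intro j
    rw [hmdef]; dsimp only
    split
    · rw [Nat.cast_sub hy_lt_s.le]
    · rfl
  have hcastv : ∀ j : Fin k, ((∏ i, (B j i).card : ℕ) : ℝ)
      = (y:ℝ)^(j:ℕ) * ((s:ℝ)-(y:ℝ)) * (s:ℝ)^(k-1-(j:ℕ)) := by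
    intro j
    rw [box_prod_card S Y' s y hScard hY'card hY'S j]
    push_cast [Nat.cast_sub hy_lt_s.le]
    ring
  have hsum_eq : ∑ j : Fin k, (((∏ i, (B j i).card : ℕ) : ℝ) * ((m j:ℝ))^(-lam))
      ≤ (s:ℝ)^k * (s:ℝ)^(-lam) := by
    have hterm : ∀ j : Fin k, ((∏ i, (B j i).card : ℕ) : ℝ) * ((m j:ℝ))^(-lam)
        = (fun jv : ℕ => (y:ℝ)^jv * ((s:ℝ)-(y:ℝ)) * (s:ℝ)^(k-1-jv) *
            ((if jv = 0 then ((s:ℝ)-(y:ℝ)) else (y:ℝ)) ^ (-lam))) (j:ℕ) := by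
      intro j
      dsimp only
      rw [hcastv j, hcastm j]
    rw [Finset.sum_congr rfl (fun j _ => hterm j)]
    rw [Fin.sum_univ_eq_sum_range (fun jv : ℕ => (y:ℝ)^jv * ((s:ℝ)-(y:ℝ)) * (s:ℝ)^(k-1-jv) *
            ((if jv = 0 then ((s:ℝ)-(y:ℝ)) else (y:ℝ)) ^ (-lam))) k]
    exact hC
  have hcntS_ge : β * (n:ℝ)^lam * ((s:ℝ)^k * (s:ℝ)^(-lam)) ≤ (cnt E S : ℝ) := by
    rw [Real.rpow_neg (Nat.cast_nonneg s)]
    rw [show β * (n:ℝ)^lam * ((s:ℝ)^k * ((s:ℝ)^lam)⁻¹)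
        = (β * (n:ℝ)^lam * (s:ℝ)^k) * ((s:ℝ)^lam)⁻¹ by ring]
    rw [mul_inv_le_iff₀' hslam]
    calc β * (n:ℝ)^lam * (s:ℝ)^k ≤ (cnt E S:ℝ) * (s:ℝ)^lam := hQ
      _ = (s:ℝ)^lam * (cnt E S:ℝ) := by ring
  have hpigeon : ∃ j : Fin k,
      β * (n:ℝ)^lam * ((∏ i, (B j i).card : ℕ) : ℝ) * ((m j:ℝ))^(-lam) ≤ (cnt E (B j) : ℝ) := by
    have hne : (Finset.univ : Finset (Fin k)).Nonempty := ⟨⟨0, hk⟩, Finset.mem_univ _⟩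
    have hle : ∑ j : Fin k, β * (n:ℝ)^lam * ((∏ i, (B j i).card : ℕ) : ℝ) * ((m j:ℝ))^(-lam)
        ≤ ∑ j : Fin k, (cnt E (B j) : ℝ) := by
      have h1 : ∑ j : Fin k, β * (n:ℝ)^lam * ((∏ i, (B j i).card : ℕ) : ℝ) * ((m j:ℝ))^(-lam)
          = β * (n:ℝ)^lam * ∑ j : Fin k, ((∏ i, (B j i).card : ℕ) : ℝ) * ((m j:ℝ))^(-lam) := by
        rw [Finset.mul_sum]
        apply Finset.sum_congr rfl
        intro j _; ring
      have h2 : (β * (n:ℝ)^lam) * (∑ j : Fin k, ((∏ i, (B j i).card : ℕ) : ℝ) * ((m j:ℝ))^(-lam))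
          ≤ (β * (n:ℝ)^lam) * ((s:ℝ)^k * (s:ℝ)^(-lam)) := by
        apply mul_le_mul_of_nonneg_left hsum_eq
        positivity
      have h3 : (∑ j : Fin k, (cnt E (B j) : ℝ)) = (cnt E S : ℝ) := by
        rw [← Nat.cast_sum]
        exact_mod_cast congrArg (Nat.cast (R := ℝ)) hpart.symm
      rw [h1, h3]
      calc (β * (n:ℝ)^lam) * (∑ j : Fin k, ((∏ i, (B j i).card : ℕ) : ℝ) * ((m j:ℝ))^(-lam))
          ≤ (β * (n:ℝ)^lam) * ((s:ℝ)^k * (s:ℝ)^(-lam)) := h2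
        _ ≤ (cnt E S : ℝ) := hcntS_ge
    obtain ⟨j, _, hj⟩ := Finset.exists_le_of_sum_le hne hle
    exact ⟨j, hj⟩
  obtain ⟨j, hj⟩ := hpigeon
  obtain ⟨U, hUB, hUcard, hUcnt⟩ := shrink E (B j) (m j) (hm1 j) (hmB j)
  -- compute the product of ratios
  have hvpos : (0:ℝ) < ((∏ i, (B j i).card : ℕ) : ℝ) := by
    have : 0 < ∏ i, (B j i).card := by
      apply Finset.prod_pos
      intro i _
      exact lt_of_lt_of_le (hm1 j) (hmB j i)
    exact_mod_cast this
  have hprod : ∏ i, ((m j:ℝ)/((B j i).card : ℝ))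
      = ((m j:ℝ))^k / ((∏ i, (B j i).card : ℕ) : ℝ) := by
    rw [Finset.prod_div_distrib, Finset.prod_const, Finset.card_univ, Fintype.card_fin,
      Nat.cast_prod]
  have hmpos : (0:ℝ) < (m j : ℝ) := by exact_mod_cast hm1 j
  have hGoodm : Good (m j) := by
    refine ⟨U, fun i => le_trans (le_trans (hUB i) ?_) (hSX i), hUcard, hm1 j, ?_⟩
    · -- B j i ⊆ S i
      rw [hBdef]; dsimp only
      rcases lt_trichotomy i j with h | h | h
      · rw [if_pos h]; exact hY'S i
      · have hnlt : ¬ i < j := by rw [h]; exact lt_irrefl j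
        rw [if_neg hnlt, if_pos h]; exact Finset.sdiff_subset
      · rw [if_neg (not_lt.2 h.le), if_neg (ne_of_gt h)]
    · -- β * n^lam * m^k ≤ cnt U * m^lam
      have hvne : ((∏ i, (B j i).card : ℕ) : ℝ) ≠ 0 := ne_of_gt hvpos
      have hwnn : (0:ℝ) ≤ ((m j:ℝ))^(-lam) := Real.rpow_nonneg hmpos.le _
      have h1 : (cnt E (B j) : ℝ) * ((m j:ℝ)^k / ((∏ i, (B j i).card : ℕ) : ℝ)) ≤ (cnt E U : ℝ) := by
        rw [← hprod]; exact hUcnt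
      have hdnn : (0:ℝ) ≤ (m j:ℝ)^k / ((∏ i, (B j i).card : ℕ) : ℝ) :=
        div_nonneg (pow_nonneg hmpos.le k) hvpos.le
      have h2 : (β * (n:ℝ)^lam * ((∏ i, (B j i).card : ℕ) : ℝ) * ((m j:ℝ))^(-lam))
          * ((m j:ℝ)^k / ((∏ i, (B j i).card : ℕ) : ℝ)) ≤ (cnt E U : ℝ) :=
        le_trans (mul_le_mul_of_nonneg_right hj hdnn) h1
      have hcancel : ((∏ i, (B j i).card : ℕ) : ℝ) * ((m j:ℝ)^k / ((∏ i, (B j i).card : ℕ) : ℝ))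
          = (m j:ℝ)^k := by
        rw [mul_div_assoc']
        exact mul_div_cancel_left₀ _ hvne
      have h3 : (β * (n:ℝ)^lam * ((∏ i, (B j i).card : ℕ) : ℝ) * ((m j:ℝ))^(-lam))
          * ((m j:ℝ)^k / ((∏ i, (B j i).card : ℕ) : ℝ))
          = β * (n:ℝ)^lam * (m j:ℝ)^k * ((m j:ℝ))^(-lam) := by
        calc (β * (n:ℝ)^lam * ((∏ i, (B j i).card : ℕ) : ℝ) * ((m j:ℝ))^(-lam))
            * ((m j:ℝ)^k / ((∏ i, (B j i).card : ℕ) : ℝ))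
            = (β * (n:ℝ)^lam * ((m j:ℝ))^(-lam)) * (((∏ i, (B j i).card : ℕ) : ℝ)
              * ((m j:ℝ)^k / ((∏ i, (B j i).card : ℕ) : ℝ))) := by ring
          _ = (β * (n:ℝ)^lam * ((m j:ℝ))^(-lam)) * (m j:ℝ)^k := by rw [hcancel]
          _ = β * (n:ℝ)^lam * (m j:ℝ)^k * ((m j:ℝ))^(-lam) := by ring
      rw [h3] at h2
      have h4 : ((m j:ℝ))^(-lam) * ((m j:ℝ))^lam = 1 := by
        rw [← Real.rpow_add hmpos]
        norm_num
      have h5 := mul_le_mul_of_nonneg_right h2 (Real.rpow_nonneg hmpos.le lam)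
      calc β * (n:ℝ)^lam * (m j:ℝ)^k
          = β * (n:ℝ)^lam * (m j:ℝ)^k * (((m j:ℝ))^(-lam) * ((m j:ℝ))^lam) := by
            rw [h4, mul_one]
        _ = β * (n:ℝ)^lam * (m j:ℝ)^k * ((m j:ℝ))^(-lam) * ((m j:ℝ))^lam := by ring
        _ ≤ (cnt E U : ℝ) * ((m j:ℝ))^lam := h5
  have : s ≤ m j := Nat.sInf_le (show m j ∈ {t | Good t} from hGoodm)
  exact absurd this (not_le.2 (hmlt j))
end

section
/- Let (Y_1, ..., Y_{d+1}, p) be a generic Pach's configuration in ℝ^d and let H be any hyperplane passing through p. Then for each of the two open half-spaces determined by H there is an index ℓ ∈ [d+1] such that Y_ℓ is fully contained in that open half-space. -/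
open scoped RealInnerProductSpace

/-- A set `X ⊆ ℝ^d` is in general position if every subset of at most `d + 1` of its
points is affinely independent. -/
def InGenPos (d : ℕ) (X : Set (EuclideanSpace ℝ (Fin d))) : Prop :=
  ∀ S : Finset (EuclideanSpace ℝ (Fin d)), ↑S ⊆ X → S.card ≤ d + 1 →
    AffineIndependent ℝ
      (fun x : (S : Set (EuclideanSpace ℝ (Fin d))) => (x : EuclideanSpace ℝ (Fin d)))

/-- A generic Pach's configuration: finite pairwise disjoint nonempty sets
`Y 0, …, Y d ⊆ ℝ^d` and a point `p ∉ Y 0 ∪ ⋯ ∪ Y d` such that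
`Y 0 ∪ ⋯ ∪ Y d ∪ {p}` is in general position and `p` belongs to every
`(Y 0, …, Y d)`-simplex. -/
def GenericPachConfig (d : ℕ) (Y : Fin (d + 1) → Finset (EuclideanSpace ℝ (Fin d)))
    (p : EuclideanSpace ℝ (Fin d)) : Prop :=
  (∀ i, (Y i).Nonempty) ∧
  (∀ i j, i ≠ j → Disjoint (Y i) (Y j)) ∧
  p ∉ ⋃ i, (Y i : Set (EuclideanSpace ℝ (Fin d))) ∧
  InGenPos d ((⋃ i, (Y i : Set (EuclideanSpace ℝ (Fin d)))) ∪ {p}) ∧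
  ∀ y : Fin (d + 1) → EuclideanSpace ℝ (Fin d),
    (∀ i, y i ∈ Y i) → p ∈ convexHull ℝ (Set.range y)

lemma pach_core {d : ℕ} (Y : Fin (d + 1) → Finset (EuclideanSpace ℝ (Fin d)))
    (p : EuclideanSpace ℝ (Fin d)) (hconf : GenericPachConfig d Y p)
    (w : EuclideanSpace ℝ (Fin d)) (b : ℝ) (hw : w ≠ 0) (hp : ⟪p, w⟫ = b)
    (h : ∀ i, ∃ y ∈ Y i, ⟪y, w⟫ ≤ b) : False := by
  classical
  obtain ⟨hne, hdisj, hpnot, hgen, hsimp⟩ := hconf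
  choose y hy hyb using h
  have hd : 0 < d := by
    rcases Nat.eq_zero_or_pos d with h0 | h0
    · subst h0; exact (hw (Subsingleton.elim w 0)).elim
    · exact h0
  have hpconv : p ∈ convexHull ℝ (Set.range y) := hsimp y hy
  set F := Finset.univ.image y with hF
  have hrange : Set.range y = (F : Set (EuclideanSpace ℝ (Fin d))) := by simp [hF]
  rw [hrange, Finset.mem_convexHull'] at hpconv
  obtain ⟨c, hc0, hc1, hcp⟩ := hpconv
  have hFsub : ∀ v ∈ F, v ∈ ⋃ i, (Y i : Set (EuclideanSpace ℝ (Fin d))) := by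
    intro v hv
    simp only [hF, Finset.mem_image, Finset.mem_univ, true_and] at hv
    obtain ⟨i, rfl⟩ := hv
    exact Set.mem_iUnion.2 ⟨i, hy i⟩
  have hFb : ∀ v ∈ F, ⟪v, w⟫ ≤ b := by
    intro v hv
    simp only [hF, Finset.mem_image, Finset.mem_univ, true_and] at hv
    obtain ⟨i, rfl⟩ := hv
    exact hyb i
  set S := F.filter (fun v => ⟪v, w⟫ = b) with hS
  have hsum : ∑ v ∈ F, c v * (b - ⟪v, w⟫) = 0 := by
    have h1 : ⟪p, w⟫ = ∑ v ∈ F, c v * ⟪v, w⟫ := by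
      rw [← hcp, sum_inner]
      exact Finset.sum_congr rfl fun v _ => real_inner_smul_left v w (c v)
    have h2 : ∑ v ∈ F, c v * b = b := by
      rw [← Finset.sum_mul, hc1, one_mul]
    calc ∑ v ∈ F, c v * (b - ⟪v, w⟫)
        = ∑ v ∈ F, (c v * b - c v * ⟪v, w⟫) := by simp [mul_sub]
      _ = (∑ v ∈ F, c v * b) - ∑ v ∈ F, c v * ⟪v, w⟫ := Finset.sum_sub_distrib _ _
      _ = b - b := by rw [h2, ← h1, hp]
      _ = 0 := sub_self b
  have hzero : ∀ v ∈ F, v ∉ S → c v = 0 := by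
    intro v hv hvS
    have hterm : c v * (b - ⟪v, w⟫) = 0 := by
      have := (Finset.sum_eq_zero_iff_of_nonneg (fun u hu =>
        mul_nonneg (hc0 u hu) (sub_nonneg.2 (hFb u hu)))).1 hsum v hv
      exact this
    have hvb : ⟪v, w⟫ ≠ b := by
      intro hvb
      exact hvS (Finset.mem_filter.2 ⟨hv, hvb⟩)
    have : b - ⟪v, w⟫ ≠ 0 := fun h' => hvb (by linarith [sub_eq_zero.1 h'])
    exact (mul_eq_zero.1 hterm).resolve_right this
  have hSF : S ⊆ F := Finset.filter_subset _ _
  have hc1' : ∑ v ∈ S, c v = 1 := by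
    rw [← hc1]
    exact (Finset.sum_subset hSF (fun v hv hvS => hzero v hv hvS)).symm ▸ rfl
  have hcp' : ∑ v ∈ S, c v • v = p := by
    rw [← hcp]
    exact Finset.sum_subset hSF (fun v hv hvS => by rw [hzero v hv hvS, zero_smul])
  have hpS : p ∈ convexHull ℝ (S : Set (EuclideanSpace ℝ (Fin d))) :=
    Finset.mem_convexHull'.2 ⟨c, fun v hv => hc0 v (hSF hv), hc1', hcp'⟩
  have hSne : S.Nonempty := by
    rcases S.eq_empty_or_nonempty with h' | h'
    · rw [h'] at hc1'; simp at hc1'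
    · exact h'
  have hpU : p ∉ ⋃ i, (Y i : Set (EuclideanSpace ℝ (Fin d))) := hpnot
  -- affine independence of S
  have hSsub : (S : Set (EuclideanSpace ℝ (Fin d))) ⊆
      (⋃ i, (Y i : Set (EuclideanSpace ℝ (Fin d)))) ∪ {p} := by
    intro v hv
    exact Set.mem_union_left _ (hFsub v (hSF hv))
  have hScard1 : S.card ≤ d + 1 := le_trans (Finset.card_le_card hSF)
    (le_trans Finset.card_image_le (by simp))
  have haiS := hgen S hSsub hScard1
  -- S lies in the hyperplane, bound its cardinality
  have hvs : vectorSpan ℝ (S : Set (EuclideanSpace ℝ (Fin d))) ≤ (ℝ ∙ w)ᗮ := by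
    rw [vectorSpan_def, Submodule.span_le]
    rintro v hv
    rw [Set.mem_vsub] at hv
    obtain ⟨x, hx, z, hz, rfl⟩ := hv
    have hxb : ⟪x, w⟫ = b := (Finset.mem_filter.1 hx).2
    have hzb : ⟪z, w⟫ = b := (Finset.mem_filter.1 hz).2
    rw [SetLike.mem_coe, Submodule.mem_orthogonal_singleton_iff_inner_left]
    simp only [vsub_eq_sub, inner_sub_left, hxb, hzb, sub_self]
  have hKfin : Module.finrank ℝ ((ℝ ∙ w)ᗮ : Submodule ℝ (EuclideanSpace ℝ (Fin d))) = d - 1 := by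
    have h1 := Submodule.finrank_add_finrank_orthogonal (𝕜 := ℝ) (ℝ ∙ w)
    rw [finrank_span_singleton hw, finrank_euclideanSpace_fin] at h1
    omega
  have hSfr : Module.finrank ℝ (vectorSpan ℝ (S : Set (EuclideanSpace ℝ (Fin d)))) = S.card - 1 := by
    have hc : Fintype.card (S : Set (EuclideanSpace ℝ (Fin d))) = (S.card - 1) + 1 := by
      have h1 : Fintype.card (S : Set (EuclideanSpace ℝ (Fin d))) = S.card := by simp
      have h2 := hSne.card_pos
      omega
    have := haiS.finrank_vectorSpan hc
    rwa [Subtype.range_coe] at this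
  have hcardS : S.card ≤ d := by
    have hle : Module.finrank ℝ (vectorSpan ℝ (S : Set (EuclideanSpace ℝ (Fin d)))) ≤
        Module.finrank ℝ ((ℝ ∙ w)ᗮ : Submodule ℝ (EuclideanSpace ℝ (Fin d))) :=
      Submodule.finrank_mono hvs
    rw [hSfr, hKfin] at hle
    have := hSne.card_pos
    omega
  -- now insert p and contradict affine independence
  have hpnS : p ∉ S := fun h' => hpU (hFsub p (hSF h'))
  set U := insert p S with hU
  have hUsub : (U : Set (EuclideanSpace ℝ (Fin d))) ⊆
      (⋃ i, (Y i : Set (EuclideanSpace ℝ (Fin d)))) ∪ {p} := by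
    intro v hv
    rw [Finset.coe_insert] at hv
    rcases hv with rfl | hv
    · exact Set.mem_union_right _ rfl
    · exact hSsub hv
  have hUcard : U.card ≤ d + 1 := by
    rw [hU, Finset.card_insert_of_notMem hpnS]
    omega
  have haiU := hgen U hUsub hUcard
  have hpmem : p ∈ U := Finset.mem_insert_self _ _
  have hspan : p ∈ affineSpan ℝ (S : Set (EuclideanSpace ℝ (Fin d))) :=
    convexHull_subset_affineSpan _ hpS
  have hnot := haiU.notMem_affineSpan_diff ⟨p, hpmem⟩ Set.univ
  apply hnot
  have himg : (fun x : (U : Set (EuclideanSpace ℝ (Fin d))) => (x : EuclideanSpace ℝ (Fin d))) ''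
      (Set.univ \ {⟨p, hpmem⟩}) = (S : Set (EuclideanSpace ℝ (Fin d))) := by
    ext v
    constructor
    · rintro ⟨⟨x, hx⟩, ⟨-, hne'⟩, rfl⟩
      rw [Finset.coe_insert, Set.mem_insert_iff] at hx
      rcases hx with rfl | hx
      · exact absurd (Set.mem_singleton_iff.2 (Subtype.ext rfl)) hne'
      · exact hx
    · intro hv
      refine ⟨⟨v, Finset.mem_insert_of_mem hv⟩, ⟨trivial, ?_⟩, rfl⟩
      intro h'
      have : v = p := congrArg Subtype.val h'
      exact hpnS (this ▸ hv)
  rw [himg]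
  exact hspan

/-- **Cutting a generic Pach's configuration by a hyperplane through `p`.** If `H` is a
hyperplane through `p` then each of the two open half-spaces determined by `H` fully
contains one of the sets `Y ℓ`. -/
theorem hyperplane_through_p_contains_some_Y {d : ℕ}
    (Y : Fin (d + 1) → Finset (EuclideanSpace ℝ (Fin d)))
    (p : EuclideanSpace ℝ (Fin d))
    (hconf : GenericPachConfig d Y p)
    (w : EuclideanSpace ℝ (Fin d)) (b : ℝ) (hw : w ≠ 0) (hp : ⟪p, w⟫ = b) :
    (∃ l : Fin (d + 1), ∀ y ∈ Y l, b < ⟪y, w⟫) ∧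
    (∃ l : Fin (d + 1), ∀ y ∈ Y l, ⟪y, w⟫ < b) := by
  constructor
  · by_contra hcon
    push_neg at hcon
    exact pach_core Y p hconf w b hw hp hcon
  · by_contra hcon
    push_neg at hcon
    apply pach_core Y p hconf (-w) (-b) (neg_ne_zero.2 hw)
      (by rw [inner_neg_right, hp])
    intro i
    obtain ⟨y, hy1, hy2⟩ := hcon i
    exact ⟨y, hy1, by rw [inner_neg_right]; linarith⟩
end

section
/- Let C ⊆ ℝ^k be a simplicial cone with apex at the origin, i.e., C = {λ_1 v_1 + ... + λ_k v_k : λ_1, ..., λ_k ≥ 0} for some linearly independent vectors v_1, ..., v_k ∈ ℝ^k, and let C' = {y ∈ ℝ^k : ⟨y, x⟩ ≥ 0 for all x ∈ C} be its dual cone. Then the intersection C ∩ C' has nonempty interior. -/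
open scoped RealInnerProductSpace

/-- **A simplicial cone and its dual cone have an intersection with nonempty interior.**
If `C ⊆ ℝ^k` is the cone of nonnegative combinations of `k` linearly independent vectors
and `C' = {y : ⟨y, x⟩ ≥ 0 for all x ∈ C}` is its dual cone, then `C ∩ C'` has nonempty
interior. -/
theorem simplicial_cone_meets_dual (k : ℕ)
    (v : Fin k → EuclideanSpace ℝ (Fin k)) (hv : LinearIndependent ℝ v) :
    (interior
      ({x : EuclideanSpace ℝ (Fin k) |
          ∃ l : Fin k → ℝ, (∀ i, 0 ≤ l i) ∧ x = ∑ i, l i • v i} ∩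
       {y : EuclideanSpace ℝ (Fin k) |
          ∀ x : EuclideanSpace ℝ (Fin k),
            (∃ l : Fin k → ℝ, (∀ i, 0 ≤ l i) ∧ x = ∑ i, l i • v i) →
            0 ≤ ⟪y, x⟫})).Nonempty := by
  rcases Nat.eq_zero_or_pos k with hk | hk
  · subst hk
    have hzero : ∀ x : EuclideanSpace ℝ (Fin 0), x = 0 := fun x => Subsingleton.elim x 0
    have h1 : {x : EuclideanSpace ℝ (Fin 0) |
        ∃ l : Fin 0 → ℝ, (∀ i, 0 ≤ l i) ∧ x = ∑ i, l i • v i} = Set.univ := by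
      ext x
      simp only [Set.mem_setOf_eq, Set.mem_univ, iff_true]
      exact ⟨0, fun i => le_refl _, Subsingleton.elim _ _⟩
    have h2 : {y : EuclideanSpace ℝ (Fin 0) | ∀ x : EuclideanSpace ℝ (Fin 0),
        (∃ l : Fin 0 → ℝ, (∀ i, 0 ≤ l i) ∧ x = ∑ i, l i • v i) → 0 ≤ ⟪y, x⟫}
        = Set.univ := by
      ext y
      simp only [Set.mem_setOf_eq, Set.mem_univ, iff_true]
      intro x _
      rw [hzero x, inner_zero_right]
    rw [h1, h2, Set.univ_inter, interior_univ]
    exact ⟨0, Set.mem_univ 0⟩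
  · haveI : Nonempty (Fin k) := ⟨⟨0, hk⟩⟩
    have hcard : Fintype.card (Fin k) = Module.finrank ℝ (EuclideanSpace ℝ (Fin k)) := by
      simp [finrank_euclideanSpace_fin]
    let B : Module.Basis (Fin k) ℝ (EuclideanSpace ℝ (Fin k)) :=
      basisOfLinearIndependentOfCardEqFinrank hv hcard
    have hB : ⇑B = v := coe_basisOfLinearIndependentOfCardEqFinrank hv hcard
    -- the compact convex set K = convex hull of the v i
    set K : Set (EuclideanSpace ℝ (Fin k)) := {x : EuclideanSpace ℝ (Fin k) |
      ∃ l : Fin k → ℝ,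
      (∀ i, 0 ≤ l i) ∧ ∑ i, l i = 1 ∧ x = ∑ i, l i • v i} with hKdef
    have hKeq : K = B.equivFun.symm '' stdSimplex ℝ (Fin k) := by
      ext x
      constructor
      · rintro ⟨l, hl0, hl1, rfl⟩
        refine ⟨l, ⟨hl0, hl1⟩, ?_⟩
        rw [Module.Basis.equivFun_symm_apply, hB]
      · rintro ⟨l, ⟨hl0, hl1⟩, rfl⟩
        exact ⟨l, hl0, hl1, by rw [Module.Basis.equivFun_symm_apply, hB]⟩
    have hcs : Continuous (B.equivFun.symm : (Fin k → ℝ) → EuclideanSpace ℝ (Fin k)) :=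
      LinearMap.continuous_of_finiteDimensional
        (B.equivFun.symm : (Fin k → ℝ) →ₗ[ℝ] EuclideanSpace ℝ (Fin k))
    have hKcompact : IsCompact K := by
      rw [hKeq]; exact (isCompact_stdSimplex ℝ (Fin k)).image hcs
    have hKconv : Convex ℝ K := by
      rw [hKeq]
      exact (convex_stdSimplex ℝ (Fin k)).linear_image
        (B.equivFun.symm : (Fin k → ℝ) →ₗ[ℝ] EuclideanSpace ℝ (Fin k))
    have hviK : ∀ i, v i ∈ K := by
      intro i
      refine ⟨Pi.single i 1, fun j => ?_, ?_, ?_⟩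
      · rcases eq_or_ne j i with h | h
        · subst h; simp
        · simp [Pi.single_eq_of_ne h]
      · simp [Finset.sum_pi_single']
      · rw [Finset.sum_eq_single i]
        · simp
        · intro j _ hj; simp [Pi.single_eq_of_ne hj]
        · simp
    have hKne : K.Nonempty := ⟨v ⟨0, hk⟩, hviK _⟩
    -- minimal norm point of K
    obtain ⟨w, hwK, hwmin⟩ :=
      exists_norm_eq_iInf_of_complete_convex hKne (hKcompact.isClosed.isComplete) hKconv 0
    have hvar := (norm_eq_iInf_iff_real_inner_le_zero hKconv hwK).mp hwmin
    have key : ∀ y ∈ K, ‖w‖ ^ 2 ≤ ⟪w, y⟫ := by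
      intro y hy
      have h := hvar y hy
      rw [zero_sub, inner_sub_right, inner_neg_left, inner_neg_left,
        real_inner_self_eq_norm_sq] at h
      linarith
    have hw0 : w ≠ 0 := by
      obtain ⟨μ, hμ0, hμ1, hμw⟩ := hwK
      intro h
      have : ∀ i, μ i = 0 :=
        Fintype.linearIndependent_iff.mp hv μ (by rw [← hμw, h])
      rw [Finset.sum_congr rfl fun i _ => this i] at hμ1
      simp at hμ1
    have hw2 : 0 < ‖w‖ ^ 2 := pow_pos (norm_pos_iff.mpr hw0) 2
    obtain ⟨μ, hμ0, hμ1, hμw⟩ := hwK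
    -- the perturbation
    set s : EuclideanSpace ℝ (Fin k) := ∑ i, v i with hs
    set ε : ℝ := ‖w‖ ^ 2 / (1 + ∑ i, |⟪s, v i⟫|) with hεdef
    have hden : (0 : ℝ) < 1 + ∑ i, |⟪s, v i⟫| := by positivity
    have hε : 0 < ε := div_pos hw2 hden
    have hbound : ∀ i, ε * |⟪s, v i⟫| < ‖w‖ ^ 2 := by
      intro i
      have h1 : |⟪s, v i⟫| ≤ ∑ j, |⟪s, v j⟫| :=
        Finset.single_le_sum (f := fun j => |⟪s, v j⟫|)
          (fun j _ => abs_nonneg _) (Finset.mem_univ i)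
      have h2 : ε * |⟪s, v i⟫| < ε * (1 + ∑ j, |⟪s, v j⟫|) := by
        apply mul_lt_mul_of_pos_left _ hε
        linarith
      calc ε * |⟪s, v i⟫| < ε * (1 + ∑ j, |⟪s, v j⟫|) := h2
        _ = ‖w‖ ^ 2 := by rw [hεdef]; field_simp
    set y : EuclideanSpace ℝ (Fin k) := w + ε • s with hy
    have hycoef : y = ∑ i, (μ i + ε) • v i := by
      rw [hy, hμw, hs, Finset.smul_sum, ← Finset.sum_add_distrib]
      exact Finset.sum_congr rfl fun i _ => by rw [add_smul]
    have hyinner : ∀ i, 0 < ⟪y, v i⟫ := by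
      intro i
      rw [hy, inner_add_left, real_inner_smul_left]
      have h1 : ‖w‖ ^ 2 ≤ ⟪w, v i⟫ := key (v i) (hviK i)
      have h2 : -(ε * |⟪s, v i⟫|) ≤ ε * ⟪s, v i⟫ := by
        have := neg_abs_le (⟪s, v i⟫)
        nlinarith [hε.le]
      nlinarith [hbound i]
    -- the open neighborhood
    set U : Set (EuclideanSpace ℝ (Fin k)) :=
      {x : EuclideanSpace ℝ (Fin k) | ∀ i, 0 < B.equivFun x i} ∩
      {x : EuclideanSpace ℝ (Fin k) | ∀ i, 0 < ⟪x, v i⟫} with hUdef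
    have hUopen : IsOpen U := by
      apply IsOpen.inter
      · have : {x : EuclideanSpace ℝ (Fin k) | ∀ i, 0 < B.equivFun x i}
            = ⋂ i, (fun x => B.equivFun x i) ⁻¹' Set.Ioi 0 := by
          ext x; simp
        rw [this]
        refine isOpen_iInter_of_finite fun i => IsOpen.preimage ?_ isOpen_Ioi
        exact (continuous_apply i).comp
          (LinearMap.continuous_of_finiteDimensional
            (B.equivFun : EuclideanSpace ℝ (Fin k) →ₗ[ℝ] (Fin k → ℝ)))
      · have : {x : EuclideanSpace ℝ (Fin k) | ∀ i, 0 < ⟪x, v i⟫}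
            = ⋂ i, (fun x : EuclideanSpace ℝ (Fin k) => ⟪x, v i⟫) ⁻¹' Set.Ioi 0 := by
          ext x; simp
        rw [this]
        exact isOpen_iInter_of_finite fun i =>
          IsOpen.preimage (continuous_id.inner continuous_const) isOpen_Ioi
    have hyU : y ∈ U := by
      constructor
      · intro i
        have heq : B.equivFun y = fun i => μ i + ε := by
          rw [hycoef, ← hB]
          have h3 : (∑ i, (μ i + ε) • B i) = B.equivFun.symm (fun i => μ i + ε) := by
            rw [Module.Basis.equivFun_symm_apply]
          rw [h3, LinearEquiv.apply_symm_apply]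
        rw [heq]
        exact add_pos_of_nonneg_of_pos (hμ0 i) hε
      · exact hyinner
    have hUsub : U ⊆
        {x : EuclideanSpace ℝ (Fin k) |
          ∃ l : Fin k → ℝ, (∀ i, 0 ≤ l i) ∧ x = ∑ i, l i • v i} ∩
        {z : EuclideanSpace ℝ (Fin k) | ∀ x : EuclideanSpace ℝ (Fin k),
          (∃ l : Fin k → ℝ, (∀ i, 0 ≤ l i) ∧ x = ∑ i, l i • v i) → 0 ≤ ⟪z, x⟫} := by
      rintro x ⟨hx1, hx2⟩
      constructor
      · refine ⟨fun i => B.equivFun x i, fun i => (hx1 i).le, ?_⟩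
        conv_lhs => rw [← B.equivFun.symm_apply_apply x]
        rw [Module.Basis.equivFun_symm_apply, hB]
      · rintro z ⟨l, hl0, rfl⟩
        rw [inner_sum]
        refine Finset.sum_nonneg fun i _ => ?_
        rw [real_inner_smul_right]
        exact mul_nonneg (hl0 i) (hx2 i).le
    exact ⟨y, mem_interior.mpr ⟨U, hUsub, hUopen, hyU⟩⟩
end

section
/- Let d be a positive integer, let a ∈ ℝ^d and let v_1, ..., v_d be unit vectors in ℝ^d with ⟨v_i, v_j⟩ ≥ 0 for all i, j ∈ [d]. Let C = conv(⋃_{i∈[d]} {a + λ v_i : λ ≥ 0}), and call a unit vector w admissible for C if a + w ∈ C. Then for every ε > 0 there exists δ > 0 such that for all a' ∈ ℝ^d and all linearly independent unit vectors v'_1, ..., v'_d with ⟨v'_i, v'_j⟩ > 0 for all i, j, if ‖a − a'‖ < δ and ‖v_i − v'_i‖ < δ for every i ∈ [d], then every unit vector w' with a' + w' ∈ conv(⋃_{i∈[d]} {a' + λ v'_i : λ ≥ 0}) satisfies ‖w − w'‖ ≤ ε for some admissible vector w of C. -/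
open scoped RealInnerProductSpace
open Finset

variable {d : ℕ}

lemma cone_hull_subset (a : EuclideanSpace ℝ (Fin d)) (v : Fin d → EuclideanSpace ℝ (Fin d)) :
    convexHull ℝ (⋃ i, {x : EuclideanSpace ℝ (Fin d) | ∃ l : ℝ, 0 ≤ l ∧ x = a + l • v i}) ⊆
      {x | ∃ c : Fin d → ℝ, (∀ i, 0 ≤ c i) ∧ x = a + ∑ i, c i • v i} := by
  apply convexHull_min
  · rintro x hx
    simp only [Set.mem_iUnion, Set.mem_setOf_eq] at hx
    obtain ⟨i, l, hl, rfl⟩ := hx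
    refine ⟨fun j => if j = i then l else 0, fun j => by positivity, ?_⟩
    simp [Finset.sum_ite_eq', ite_smul]
  · rintro x ⟨c, hc, rfl⟩ y ⟨c', hc', rfl⟩ p q hp hq hpq
    refine ⟨fun i => p * c i + q * c' i,
      fun i => by have := hc i; have := hc' i; positivity, ?_⟩
    simp only [smul_add, Finset.smul_sum, smul_smul, add_smul, Finset.sum_add_distrib]
    have ha : p • a + q • a = a := by rw [← add_smul, hpq, one_smul]
    conv_rhs => rw [← ha]
    abel

lemma cone_subset_hull (hd : 0 < d) (a : EuclideanSpace ℝ (Fin d))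
    (v : Fin d → EuclideanSpace ℝ (Fin d)) (c : Fin d → ℝ) (hc : ∀ i, 0 ≤ c i) :
    a + ∑ i, c i • v i ∈
      convexHull ℝ (⋃ i, {x : EuclideanSpace ℝ (Fin d) | ∃ l : ℝ, 0 ≤ l ∧ x = a + l • v i}) := by
  have hds : (0:ℝ) < d := by exact_mod_cast hd
  have hz : ∀ i ∈ (Finset.univ : Finset (Fin d)), a + ((d : ℝ) * c i) • v i ∈
      (⋃ i, {x : EuclideanSpace ℝ (Fin d) | ∃ l : ℝ, 0 ≤ l ∧ x = a + l • v i}) := by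
    intro i _
    exact Set.mem_iUnion.2 ⟨i, ⟨(d : ℝ) * c i, by have := hc i; positivity, rfl⟩⟩
  have h := Finset.centerMass_mem_convexHull (t := (Finset.univ : Finset (Fin d)))
    (w := fun _ => (1:ℝ)/d) (z := fun i => a + ((d : ℝ) * c i) • v i)
    (fun i _ => by positivity) (by simp [Finset.sum_const]; positivity) hz
  have hsum : ∑ _i : Fin d, (1:ℝ)/d = 1 := by
    simp [Finset.sum_const]; field_simp
  rw [Finset.centerMass, hsum, inv_one, one_smul] at h
  convert h using 1
  rw [Finset.sum_congr rfl (fun i _ => smul_add ((1:ℝ)/d) a (((d:ℝ) * c i) • v i)),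
    Finset.sum_add_distrib, ← Finset.sum_smul, hsum, one_smul]
  congr 1
  refine Finset.sum_congr rfl fun i _ => ?_
  rw [smul_smul]
  congr 1
  field_simp

/-- **Continuity of admissible vectors of acute simplicial cones.** Let
`C = C(a, v 0, …, v (d-1))` be the cone generated by the rays from `a` in the directions
of the unit vectors `v i`, with `⟨v i, v j⟩ ≥ 0` for all `i, j`. For every `ε > 0` there
is `δ > 0` such that for every acute simplicial cone `C(a', v' 0, …, v' (d-1))` with
`‖a - a'‖ < δ` and `‖v i - v' i‖ < δ` for every `i`, every admissible vector `w'` of the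
cone `C(a', v')` is within distance `ε` of some admissible vector `w` of `C`. -/
theorem acute_cone_admissible_limit {d : ℕ} (hd : 0 < d)
    (a : EuclideanSpace ℝ (Fin d)) (v : Fin d → EuclideanSpace ℝ (Fin d))
    (hv1 : ∀ i, ‖v i‖ = 1) (hvpos : ∀ i j, 0 ≤ ⟪v i, v j⟫) :
    ∀ ε : ℝ, 0 < ε → ∃ δ : ℝ, 0 < δ ∧
      ∀ (a' : EuclideanSpace ℝ (Fin d)) (v' : Fin d → EuclideanSpace ℝ (Fin d)),
        LinearIndependent ℝ v' →
        (∀ i, ‖v' i‖ = 1) →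
        (∀ i j, 0 < ⟪v' i, v' j⟫) →
        ‖a - a'‖ < δ →
        (∀ i, ‖v i - v' i‖ < δ) →
        ∀ w' : EuclideanSpace ℝ (Fin d), ‖w'‖ = 1 →
          a' + w' ∈ convexHull ℝ
            (⋃ i, {x : EuclideanSpace ℝ (Fin d) | ∃ l : ℝ, 0 ≤ l ∧ x = a' + l • v' i}) →
          ∃ w : EuclideanSpace ℝ (Fin d), ‖w‖ = 1 ∧
            a + w ∈ convexHull ℝ
              (⋃ i, {x : EuclideanSpace ℝ (Fin d) | ∃ l : ℝ, 0 ≤ l ∧ x = a + l • v i}) ∧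
            ‖w - w'‖ ≤ ε := by
  intro ε hε
  have hds : (0:ℝ) < d := by exact_mod_cast hd
  refine ⟨min (ε/(2*d)) (1/(2*d)), by positivity, ?_⟩
  intro a' v' _hli hv'1 hv'pos _ha hvd w' hw' hmem
  set δ : ℝ := min (ε/(2*d)) (1/(2*d)) with hδdef
  obtain ⟨c, hc, heq⟩ := cone_hull_subset a' v' hmem
  have hw'eq : w' = ∑ i, c i • v' i := by
    have := heq
    exact add_left_cancel this
  -- bound on coefficients
  have hsq : ∑ i, c i ^ 2 ≤ 1 := by
    have h1 : ⟪w', w'⟫ = ∑ i, ∑ j, c i * c j * ⟪v' i, v' j⟫ := by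
      rw [hw'eq, sum_inner]
      refine Finset.sum_congr rfl fun i _ => ?_
      rw [inner_sum]
      refine Finset.sum_congr rfl fun j _ => ?_
      rw [real_inner_smul_left, real_inner_smul_right]; ring
    have h2 : ⟪w', w'⟫ = 1 := by
      rw [real_inner_self_eq_norm_sq, hw']; norm_num
    have h3 : ∀ i ∈ (univ : Finset (Fin d)), c i ^ 2 ≤ ∑ j, c i * c j * ⟪v' i, v' j⟫ := by
      intro i _
      have hdiag : c i * c i * ⟪v' i, v' i⟫ = c i ^ 2 := by
        rw [real_inner_self_eq_norm_sq, hv'1 i]; ring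
      calc c i ^ 2 = c i * c i * ⟪v' i, v' i⟫ := hdiag.symm
        _ ≤ ∑ j, c i * c j * ⟪v' i, v' j⟫ := by
            refine Finset.single_le_sum (f := fun j => c i * c j * ⟪v' i, v' j⟫) (fun j _ => ?_) (Finset.mem_univ i)
            have := (hv'pos i j).le
            have := hc i; have := hc j; positivity
    calc ∑ i, c i ^ 2 ≤ ∑ i, ∑ j, c i * c j * ⟪v' i, v' j⟫ := Finset.sum_le_sum h3
      _ = 1 := by rw [← h1, h2]
  have hc1 : ∀ i, c i ≤ 1 := by
    intro i
    have h4 : c i ^ 2 ≤ 1 := le_trans (Finset.single_le_sum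
      (fun j _ => sq_nonneg (c j)) (Finset.mem_univ i)) hsq
    nlinarith [hc i]
  have hcsum : ∑ i, c i ≤ d := by
    calc ∑ i, c i ≤ ∑ _i : Fin d, (1:ℝ) := Finset.sum_le_sum fun i _ => hc1 i
      _ = d := by simp
  -- the approximating vector
  set u : EuclideanSpace ℝ (Fin d) := ∑ i, c i • v i with hu
  have hub : ‖u - w'‖ ≤ (d:ℝ) * δ := by
    have : u - w' = ∑ i, c i • (v i - v' i) := by
      rw [hu, hw'eq, ← Finset.sum_sub_distrib]
      exact Finset.sum_congr rfl fun i _ => (smul_sub (c i) (v i) (v' i)).symm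
    rw [this]
    calc ‖∑ i, c i • (v i - v' i)‖ ≤ ∑ i, ‖c i • (v i - v' i)‖ := norm_sum_le _ _
      _ ≤ ∑ i, c i * δ := by
          refine Finset.sum_le_sum fun i _ => ?_
          rw [norm_smul, Real.norm_eq_abs, abs_of_nonneg (hc i)]
          exact mul_le_mul_of_nonneg_left (hvd i).le (hc i)
      _ = (∑ i, c i) * δ := by rw [← Finset.sum_mul]
      _ ≤ (d:ℝ) * δ := by
          have hδ0 : (0:ℝ) ≤ δ := le_min (by positivity) (by positivity)
          exact mul_le_mul_of_nonneg_right hcsum hδ0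
  have hdδ1 : (d:ℝ) * δ ≤ 1/2 := by
    have : δ ≤ 1/(2*d) := min_le_right _ _
    calc (d:ℝ) * δ ≤ (d:ℝ) * (1/(2*d)) := by
          exact mul_le_mul_of_nonneg_left this hds.le
      _ = 1/2 := by field_simp
  have hdδε : (d:ℝ) * δ ≤ ε/2 := by
    have : δ ≤ ε/(2*d) := min_le_left _ _
    calc (d:ℝ) * δ ≤ (d:ℝ) * (ε/(2*d)) := mul_le_mul_of_nonneg_left this hds.le
      _ = ε/2 := by field_simp
  have hulb : (1:ℝ)/2 ≤ ‖u‖ := by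
    have h5 : ‖w'‖ - ‖u‖ ≤ ‖w' - u‖ := norm_sub_norm_le _ _
    rw [hw', norm_sub_rev] at h5
    linarith
  have huz : ‖u‖ ≠ 0 := by positivity
  refine ⟨‖u‖⁻¹ • u, ?_, ?_, ?_⟩
  · rw [norm_smul, norm_inv, norm_norm, inv_mul_cancel₀ huz]
  · have : a + ‖u‖⁻¹ • u = a + ∑ i, (‖u‖⁻¹ * c i) • v i := by
      rw [hu, Finset.smul_sum]
      congr 1
      exact Finset.sum_congr rfl fun i _ => (smul_smul _ _ _)
    rw [this]
    exact cone_subset_hull hd a v _ (fun i => by have := hc i; positivity)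
  · have h6 : ‖u‖⁻¹ • u - w' = (‖u‖⁻¹ • u - u) + (u - w') := by abel
    have h7 : ‖‖u‖⁻¹ • u - u‖ = |1 - ‖u‖| := by
      have : ‖u‖⁻¹ • u - u = (‖u‖⁻¹ - 1) • u := by rw [sub_smul, one_smul]
      rw [this, norm_smul, Real.norm_eq_abs, ← abs_of_nonneg (norm_nonneg u),
        ← abs_mul]
      congr 1
      field_simp
      rw [abs_norm]; ring
    have h8 : |1 - ‖u‖| ≤ ‖u - w'‖ := by
      have := abs_norm_sub_norm_le w' u
      rw [hw', norm_sub_rev] at this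
      exact this
    calc ‖‖u‖⁻¹ • u - w'‖ ≤ ‖‖u‖⁻¹ • u - u‖ + ‖u - w'‖ := by
          rw [h6]; exact norm_add_le _ _
      _ ≤ |1 - ‖u‖| + (d:ℝ) * δ := by
          rw [h7]; linarith
      _ ≤ (d:ℝ) * δ + (d:ℝ) * δ := by linarith [le_trans h8 hub]
      _ ≤ ε := by linarith
end
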